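/- arXiv:1805.00818 — 9 statements merged into one kernel-verified Lean document; each statement's English description precedes it below -/
import Mathlib

section
/- Orthonormality of the even generalized q-Hermite polynomials induced by little q-Laguerre orthonormality. Let 0 < q < 1, α > −1, κ ≥ 0. Define the little q-Laguerre weight v(x) = x^α·∏_{l=0}^∞ (1 − q^{2(l+1)}κ²·x) for x > 0, and the generalized q-Hermite weight ω(x) = |x|^{2α+1}·∏_{l=0}^∞ (1 − q^{2(l+1)}κ²·x²) for x ∈ ℝ. Let (p_n)_{n≥0} be real functions on (0,1] such that for all m, n the series Σ_{k=0}^∞ p_m(q^{2k})·p_n(q^{2k})·v(q^{2k})·q^{2k} converges absolutely and (1 − q²)·Σ_{k=0}^∞ p_m(q^{2k})·p_n(q^{2k})·v(q^{2k})·q^{2k} = δ_{mn}. Define P_{2n}(x) = √((1+q)/2)·p_n(x²). Then for all m, n: (1 − q)·Σ_{k=0}^∞ [P_{2m}(q^k)·P_{2n}(q^k)·ω(q^k) + P_{2m}(−q^k)·P_{2n}(−q^k)·ω(−q^k)]·q^k = δ_{mn}, i.e. the Jackson q-integral over [−1,1] of P_{2m}·P_{2n}·ω equals δ_{mn}. 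-/
/-- Orthonormality of the even generalized q-Hermite polynomials
`P (2n) x = √((1+q)/2) · pₙ(x²)` with respect to the Jackson q-integral of the
generalized q-Hermite weight `ω` on [−1,1], induced by the orthonormality of
the little q-Laguerre polynomials `pₙ` with respect to the Jackson q²-integral
of the little q-Laguerre weight `v` on [0,1]. -/
theorem even_qHermite_orthonormal (q α κ : ℝ) (hq0 : 0 < q) (hq1 : q < 1)
    (hα : -1 < α) (hκ : 0 ≤ κ)
    (v ω : ℝ → ℝ)
    (hv : ∀ x : ℝ, 0 < x →
      v x = x ^ α * ∏' l : ℕ, (1 - q ^ (2 * (l + 1)) * κ ^ 2 * x))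
    (hω : ∀ x : ℝ,
      ω x = |x| ^ (2 * α + 1) * ∏' l : ℕ, (1 - q ^ (2 * (l + 1)) * κ ^ 2 * x ^ 2))
    (p : ℕ → ℝ → ℝ)
    (hsum : ∀ m n : ℕ, Summable (fun k : ℕ =>
      |p m (q ^ (2 * k)) * p n (q ^ (2 * k)) * v (q ^ (2 * k)) * q ^ (2 * k)|))
    (horth : ∀ m n : ℕ,
      (1 - q ^ 2) * ∑' k : ℕ,
          p m (q ^ (2 * k)) * p n (q ^ (2 * k)) * v (q ^ (2 * k)) * q ^ (2 * k)
        = if m = n then 1 else 0)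
    (P : ℕ → ℝ → ℝ)
    (hP : ∀ (n : ℕ) (x : ℝ), P (2 * n) x = Real.sqrt ((1 + q) / 2) * p n (x ^ 2)) :
    ∀ m n : ℕ,
      (1 - q) * ∑' k : ℕ,
          (P (2 * m) (q ^ k) * P (2 * n) (q ^ k) * ω (q ^ k)
            + P (2 * m) (-(q ^ k)) * P (2 * n) (-(q ^ k)) * ω (-(q ^ k))) * q ^ k
        = if m = n then 1 else 0 := by
  intro m n
  have hhalf : (0:ℝ) ≤ (1 + q) / 2 := by linarith
  have hsq : Real.sqrt ((1 + q) / 2) * Real.sqrt ((1 + q) / 2) = (1 + q) / 2 :=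
    Real.mul_self_sqrt hhalf
  have key : ∀ k : ℕ,
      (P (2 * m) (q ^ k) * P (2 * n) (q ^ k) * ω (q ^ k)
        + P (2 * m) (-(q ^ k)) * P (2 * n) (-(q ^ k)) * ω (-(q ^ k))) * q ^ k
      = (1 + q) *
          (p m (q ^ (2 * k)) * p n (q ^ (2 * k)) * v (q ^ (2 * k)) * q ^ (2 * k)) := by
    intro k
    have hqk : 0 < q ^ k := pow_pos hq0 k
    have hq2k : (q ^ k) ^ 2 = q ^ (2 * k) := by rw [mul_comm, pow_mul]
    have hneg : (-(q ^ k)) ^ 2 = q ^ (2 * k) := by rw [neg_pow, ← hq2k]; ring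
    -- ω(q^k) = q^k * v (q^(2k))
    have habs : |q ^ k| = q ^ k := abs_of_pos hqk
    have hrpow : (q ^ k) ^ (2 * α + 1) = (q ^ (2 * k)) ^ α * q ^ k := by
      rw [Real.rpow_add hqk, Real.rpow_one, ← hq2k]
      congr 1
      rw [← Real.rpow_natCast (q ^ k) 2, ← Real.rpow_mul hqk.le]
      norm_num
    have homega : ω (q ^ k) = q ^ k * v (q ^ (2 * k)) := by
      rw [hω, hv _ (pow_pos hq0 _), habs, hrpow, hq2k]
      ring
    have homega' : ω (-(q ^ k)) = q ^ k * v (q ^ (2 * k)) := by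
      rw [hω, abs_neg, habs, hneg, ← homega, hω, habs, hq2k]
    rw [hP, hP, hP, hP, hq2k, hneg, homega, homega']
    have hmul : q ^ k * q ^ k = q ^ (2 * k) := by rw [← hq2k]; ring
    linear_combination
      (2 * p m (q ^ (2 * k)) * p n (q ^ (2 * k)) * v (q ^ (2 * k)) * q ^ k * q ^ k) * hsq
      + ((1 + q) * (p m (q ^ (2 * k)) * p n (q ^ (2 * k)) * v (q ^ (2 * k)))) * hmul
  calc (1 - q) * ∑' k : ℕ,
          (P (2 * m) (q ^ k) * P (2 * n) (q ^ k) * ω (q ^ k)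
            + P (2 * m) (-(q ^ k)) * P (2 * n) (-(q ^ k)) * ω (-(q ^ k))) * q ^ k
      = (1 - q) * ∑' k : ℕ, (1 + q) *
          (p m (q ^ (2 * k)) * p n (q ^ (2 * k)) * v (q ^ (2 * k)) * q ^ (2 * k)) := by
        rw [tsum_congr key]
    _ = (1 - q ^ 2) * ∑' k : ℕ,
          p m (q ^ (2 * k)) * p n (q ^ (2 * k)) * v (q ^ (2 * k)) * q ^ (2 * k) := by
        rw [tsum_mul_left]; ring
    _ = if m = n then 1 else 0 := horth m n
end

section
/- Orthonormality of the odd generalized q-Hermite polynomials induced by little q-Laguerre orthonormality with shifted parameter. Let 0 < q < 1, α > −1, κ ≥ 0. Define the shifted little q-Laguerre weight ṽ(x) = x^{α+1}·∏_{l=0}^∞ (1 − q^{2(l+1)}κ²·x) for x > 0, and the generalized q-Hermite weight ω(x) = |x|^{2α+1}·∏_{l=0}^∞ (1 − q^{2(l+1)}κ²·x²) for x ∈ ℝ. Let (p̃_n)_{n≥0} be real functions on (0,1] such that for all m, n the series Σ_{k=0}^∞ p̃_m(q^{2k})·p̃_n(q^{2k})·ṽ(q^{2k})·q^{2k} converges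 absolutely and (1 − q²)·Σ_{k=0}^∞ p̃_m(q^{2k})·p̃_n(q^{2k})·ṽ(q^{2k})·q^{2k} = δ_{mn}. Define P_{2n+1}(x) = √((1+q)/2)·x·p̃_n(x²). Then for all m, n: (1 − q)·Σ_{k=0}^∞ [P_{2m+1}(q^k)·P_{2n+1}(q^k)·ω(q^k) + P_{2m+1}(−q^k)·P_{2n+1}(−q^k)·ω(−q^k)]·q^k = δ_{mn}, i.e. the Jackson q-integral over [−1,1] of P_{2m+1}·P_{2n+1}·ω equals δ_{mn}. -/
/-- Orthonormality of the odd generalized q-Hermite polynomials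
`P (2n+1) x = √((1+q)/2) · x · p̃ₙ(x²)` with respect to the Jackson q-integral
of the generalized q-Hermite weight `ω` on [−1,1], induced by the
orthonormality of the little q-Laguerre polynomials `p̃ₙ` (shifted parameter
α+1) with respect to the Jackson q²-integral of the shifted little q-Laguerre
weight `ṽ` on [0,1]. -/
theorem odd_qHermite_orthonormal (q α κ : ℝ) (hq0 : 0 < q) (hq1 : q < 1)
    (hα : -1 < α) (hκ : 0 ≤ κ)
    (vt ω : ℝ → ℝ)
    (hvt : ∀ x : ℝ, 0 < x →
      vt x = x ^ (α + 1) * ∏' l : ℕ, (1 - q ^ (2 * (l + 1)) * κ ^ 2 * x))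
    (hω : ∀ x : ℝ,
      ω x = |x| ^ (2 * α + 1) * ∏' l : ℕ, (1 - q ^ (2 * (l + 1)) * κ ^ 2 * x ^ 2))
    (pt : ℕ → ℝ → ℝ)
    (hsum : ∀ m n : ℕ, Summable (fun k : ℕ =>
      |pt m (q ^ (2 * k)) * pt n (q ^ (2 * k)) * vt (q ^ (2 * k)) * q ^ (2 * k)|))
    (horth : ∀ m n : ℕ,
      (1 - q ^ 2) * ∑' k : ℕ,
          pt m (q ^ (2 * k)) * pt n (q ^ (2 * k)) * vt (q ^ (2 * k)) * q ^ (2 * k)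
        = if m = n then 1 else 0)
    (P : ℕ → ℝ → ℝ)
    (hP : ∀ (n : ℕ) (x : ℝ),
      P (2 * n + 1) x = Real.sqrt ((1 + q) / 2) * x * pt n (x ^ 2)) :
    ∀ m n : ℕ,
      (1 - q) * ∑' k : ℕ,
          (P (2 * m + 1) (q ^ k) * P (2 * n + 1) (q ^ k) * ω (q ^ k)
            + P (2 * m + 1) (-(q ^ k)) * P (2 * n + 1) (-(q ^ k)) * ω (-(q ^ k)))
          * q ^ k
        = if m = n then 1 else 0 := by

  intro m n
  have hc : Real.sqrt ((1 + q) / 2) * Real.sqrt ((1 + q) / 2) = (1 + q) / 2 :=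
    Real.mul_self_sqrt (by linarith)
  have key : ∀ k : ℕ,
      (P (2 * m + 1) (q ^ k) * P (2 * n + 1) (q ^ k) * ω (q ^ k)
        + P (2 * m + 1) (-(q ^ k)) * P (2 * n + 1) (-(q ^ k)) * ω (-(q ^ k))) * q ^ k
      = (1 + q) * (pt m (q ^ (2 * k)) * pt n (q ^ (2 * k)) * vt (q ^ (2 * k)) * q ^ (2 * k)) := by
    intro k
    have ha : (0 : ℝ) < q ^ k := pow_pos hq0 k
    have h2k : q ^ (2 * k) = (q ^ k) ^ 2 := by
      rw [pow_mul]; ring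
    have hωv : q ^ k * ω (q ^ k) = vt (q ^ (2 * k)) := by
      rw [hω, hvt _ (by positivity), h2k, abs_of_pos ha,
        ← Real.rpow_natCast (q ^ k) 2, ← Real.rpow_mul ha.le,
        show ((2 : ℕ) : ℝ) * (α + 1) = (2 * α + 1) + 1 by push_cast; ring,
        Real.rpow_add ha, Real.rpow_one, Real.rpow_add ha,
        show ((2 : ℝ)) = ((2 : ℕ) : ℝ) by norm_num, Real.rpow_natCast]
      rw [Real.rpow_add ha, Real.rpow_one]
      ring
    have hωe : ω (-(q ^ k)) = ω (q ^ k) := by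
      rw [hω, hω, abs_neg, neg_sq]
    rw [hP, hP, hP, hP, hωe, neg_sq, ← hωv, h2k]
    linear_combination (2 * pt m ((q ^ k) ^ 2) * pt n ((q ^ k) ^ 2) * (q ^ k) ^ 3
      * ω (q ^ k)) * hc
  calc (1 - q) * ∑' k : ℕ,
          (P (2 * m + 1) (q ^ k) * P (2 * n + 1) (q ^ k) * ω (q ^ k)
            + P (2 * m + 1) (-(q ^ k)) * P (2 * n + 1) (-(q ^ k)) * ω (-(q ^ k))) * q ^ k
      = (1 - q) * ∑' k : ℕ, (1 + q) * (pt m (q ^ (2 * k)) * pt n (q ^ (2 * k)) * vt (q ^ (2 * k)) * q ^ (2 * k)) := by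
        rw [tsum_congr key]
    _ = (1 - q) * ((1 + q) * ∑' k : ℕ, pt m (q ^ (2 * k)) * pt n (q ^ (2 * k)) * vt (q ^ (2 * k)) * q ^ (2 * k)) := by
        rw [tsum_mul_left]
    _ = (1 - q ^ 2) * ∑' k : ℕ, pt m (q ^ (2 * k)) * pt n (q ^ (2 * k)) * vt (q ^ (2 * k)) * q ^ (2 * k) := by ring
    _ = if m = n then 1 else 0 := horth m n
end

section
/- Fourier expansion of the t-derivative of Laguerre-type orthonormal polynomials (Theorem 2.3). Let α > −1 and let I ⊆ (0,∞) be an open interval. Let p : ℕ → I → ℝ → ℝ, a, b : ℕ → I → ℝ with a_0 ≡ 0 and p_{−1} ≡ 0, and C : ℕ → ℕ → I → ℝ. Assume for all t ∈ I: (i) for all m, n: the function x ↦ p_m(t,x)·p_n(t,x)·x^α·e^{−tx} is Lebesgue integrable on (0,∞) and ∫_0^∞ p_m(t,x)·p_n(t,x)·x^α·e^{−tx} dx = δ_{mn}; (ii) for all n and x > 0: x·p_n(t,x) = a_{n+1}(t)·p_{n+1}(t,x) + b_n(t)·p_n(t,x) + a_n(t)·p_{n−1}(t,x); (iii) for all n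 and x > 0 the partial derivative ∂_t p_n(t,x) exists and ∂_t p_n(t,x) = Σ_{k=0}^n C_{kn}(t)·p_k(t,x); (iv) for all m, n: the function x ↦ x·p_m(t,x)·p_n(t,x)·x^α·e^{−tx} is integrable and ∫_0^∞ [∂_t p_m(t,x)·p_n(t,x) + p_m(t,x)·∂_t p_n(t,x) − x·p_m(t,x)·p_n(t,x)]·x^α·e^{−tx} dx = 0. Then for all n and t: C_{nn}(t) = b_n(t)/2, C_{n−1,n}(t) = a_n(t), and C_{mn}(t) = 0 for all m < n−1; consequently ∂_t p_n(t,x) = (b_n(t)/2)·p_n(t,x) + a_n(t)·p_{n−1}(t,x) for all x > 0. -/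
open MeasureTheory

/-- Theorem 2.3: Fourier expansion of the t-derivative of the orthonormal
polynomials of the deformed Laguerre weight `x^α · exp(−t·x)` on (0,∞).
Here `dtp n t x` denotes the partial derivative ∂ₜ pₙ(t,x), `C k n t` are the
Fourier coefficients of the expansion of ∂ₜ pₙ(t,·) in the basis {pₖ(t,·)},
and `a n t`, `b n t` are the three-term recurrence coefficients
(with the conventions `a 0 ≡ 0` and `p₋₁ ≡ 0`). -/
theorem laguerre_deriv_fourier_expansion (α : ℝ) (hα : -1 < α) (I : Set ℝ)
    (hIint : ∃ c d : ℝ, I = Set.Ioo c d) (hIpos : I ⊆ Set.Ioi 0)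
    (p dtp : ℕ → ℝ → ℝ → ℝ) (a b : ℕ → ℝ → ℝ) (C : ℕ → ℕ → ℝ → ℝ)
    (ha0 : ∀ t : ℝ, a 0 t = 0)
    (horthint : ∀ t ∈ I, ∀ m n : ℕ,
      IntegrableOn (fun x : ℝ => p m t x * p n t x * x ^ α * Real.exp (-t * x))
        (Set.Ioi 0))
    (horth : ∀ t ∈ I, ∀ m n : ℕ,
      ∫ x in Set.Ioi (0 : ℝ), p m t x * p n t x * x ^ α * Real.exp (-t * x)
        = if m = n then 1 else 0)
    (hrec : ∀ t ∈ I, ∀ n : ℕ, ∀ x : ℝ, 0 < x →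
      x * p n t x = a (n + 1) t * p (n + 1) t x + b n t * p n t x
        + a n t * p (n - 1) t x)
    (hderiv : ∀ t ∈ I, ∀ n : ℕ, ∀ x : ℝ, 0 < x →
      HasDerivAt (fun s : ℝ => p n s x) (dtp n t x) t)
    (hexp : ∀ t ∈ I, ∀ n : ℕ, ∀ x : ℝ, 0 < x →
      dtp n t x = ∑ k ∈ Finset.range (n + 1), C k n t * p k t x)
    (hxint : ∀ t ∈ I, ∀ m n : ℕ,
      IntegrableOn (fun x : ℝ => x * p m t x * p n t x * x ^ α * Real.exp (-t * x))
        (Set.Ioi 0))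
    (hdorth : ∀ t ∈ I, ∀ m n : ℕ,
      ∫ x in Set.Ioi (0 : ℝ),
        (dtp m t x * p n t x + p m t x * dtp n t x - x * p m t x * p n t x)
          * x ^ α * Real.exp (-t * x) = 0) :
    ∀ t ∈ I, ∀ n : ℕ,
      C n n t = b n t / 2 ∧
      (1 ≤ n → C (n - 1) n t = a n t) ∧
      (∀ m : ℕ, m + 1 < n → C m n t = 0) ∧
      (∀ x : ℝ, 0 < x →
        dtp n t x = b n t / 2 * p n t x + a n t * p (n - 1) t x) := by

  intro t ht n
  set w : ℝ → ℝ := fun x => x ^ α * Real.exp (-t * x) with hw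
  have hint : ∀ m k : ℕ,
      IntegrableOn (fun x : ℝ => p m t x * p k t x * w x) (Set.Ioi 0) := by
    intro m k
    simpa [w, mul_assoc] using horthint t ht m k
  have horth' : ∀ m k : ℕ,
      ∫ x in Set.Ioi (0 : ℝ), p m t x * p k t x * w x = if m = k then 1 else 0 := by
    intro m k
    rw [← horth t ht m k]
    apply setIntegral_congr_fun measurableSet_Ioi
    intro x hx
    simp [w, mul_assoc]
  -- integrability of dtp m * p k * w
  have hintd : ∀ m k : ℕ,
      IntegrableOn (fun x : ℝ => dtp m t x * p k t x * w x) (Set.Ioi 0) := by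
    intro m k
    apply IntegrableOn.congr_fun
      (f := fun x : ℝ => ∑ j ∈ Finset.range (m + 1), C j m t * (p j t x * p k t x * w x))
    · exact integrable_finset_sum _ (fun j _ => (hint j k).const_mul _)
    · intro x hx
      simp only [hexp t ht m x hx, Finset.sum_mul]
      exact Finset.sum_congr rfl fun j _ => by ring
    · exact measurableSet_Ioi
  -- Lemma A : Fourier coefficient formula
  have hA : ∀ m k : ℕ,
      ∫ x in Set.Ioi (0 : ℝ), dtp m t x * p k t x * w x
        = if k ≤ m then C k m t else 0 := by
    intro m k
    have h1 : ∫ x in Set.Ioi (0 : ℝ), dtp m t x * p k t x * w x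
        = ∫ x in Set.Ioi (0 : ℝ),
            ∑ j ∈ Finset.range (m + 1), C j m t * (p j t x * p k t x * w x) := by
      apply setIntegral_congr_fun measurableSet_Ioi
      intro x hx
      simp only [hexp t ht m x hx, Finset.sum_mul]
      exact Finset.sum_congr rfl fun j _ => by ring
    rw [h1, integral_finset_sum _ (fun j _ => (hint j k).const_mul _)]
    have h2 : ∀ j ∈ Finset.range (m + 1),
        (∫ x in Set.Ioi (0 : ℝ), C j m t * (p j t x * p k t x * w x))
          = if j = k then C j m t else 0 := by
      intro j _
      rw [integral_const_mul, horth' j k]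
      simp [mul_ite]
    rw [Finset.sum_congr rfl h2, Finset.sum_ite_eq' (Finset.range (m + 1)) k
      (fun j => C j m t)]
    simp [Nat.lt_succ_iff]
  -- Lemma B : moments of x p_m p_k
  have hB : ∀ m k : ℕ,
      ∫ x in Set.Ioi (0 : ℝ), x * p m t x * p k t x * w x
        = a (m + 1) t * (if m + 1 = k then 1 else 0)
          + b m t * (if m = k then 1 else 0)
          + a m t * (if m - 1 = k then 1 else 0) := by
    intro m k
    have h1 : Set.EqOn (fun x : ℝ => x * p m t x * p k t x * w x)
        (fun x : ℝ => a (m + 1) t * (p (m + 1) t x * p k t x * w x)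
          + b m t * (p m t x * p k t x * w x)
          + a m t * (p (m - 1) t x * p k t x * w x)) (Set.Ioi 0) := by
      intro x hx
      have hr := hrec t ht m x hx
      show x * p m t x * p k t x * w x = _
      rw [show x * p m t x * p k t x * w x = (x * p m t x) * (p k t x * w x) by ring, hr]
      ring
    have hi1 : Integrable (fun x : ℝ => a (m + 1) t * (p (m + 1) t x * p k t x * w x))
        (volume.restrict (Set.Ioi 0)) := (hint (m + 1) k).const_mul _
    have hi2 : Integrable (fun x : ℝ => b m t * (p m t x * p k t x * w x))
        (volume.restrict (Set.Ioi 0)) := (hint m k).const_mul _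
    have hi3 : Integrable (fun x : ℝ => a m t * (p (m - 1) t x * p k t x * w x))
        (volume.restrict (Set.Ioi 0)) := (hint (m - 1) k).const_mul _
    have hi12 : Integrable (fun x : ℝ => a (m + 1) t * (p (m + 1) t x * p k t x * w x)
        + b m t * (p m t x * p k t x * w x)) (volume.restrict (Set.Ioi 0)) := hi1.add hi2
    rw [setIntegral_congr_fun measurableSet_Ioi h1, integral_add hi12 hi3, integral_add hi1 hi2,
      integral_const_mul, integral_const_mul, integral_const_mul,
      horth' (m + 1) k, horth' m k, horth' (m - 1) k]
  -- Lemma C : the key relation from hdorth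
  have hC : ∀ m k : ℕ,
      (if k ≤ m then C k m t else 0) + (if m ≤ k then C m k t else 0)
        - (a (m + 1) t * (if m + 1 = k then 1 else 0)
          + b m t * (if m = k then 1 else 0)
          + a m t * (if m - 1 = k then 1 else 0)) = 0 := by
    intro m k
    have h0 := hdorth t ht m k
    have heq : Set.EqOn
        (fun x : ℝ => (dtp m t x * p k t x + p m t x * dtp k t x - x * p m t x * p k t x)
          * x ^ α * Real.exp (-t * x))
        (fun x : ℝ => dtp m t x * p k t x * w x + p m t x * dtp k t x * w x
          - x * p m t x * p k t x * w x) (Set.Ioi 0) := by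
      intro x hx
      simp only [w]
      ring
    have hint2 : IntegrableOn (fun x : ℝ => p m t x * dtp k t x * w x) (Set.Ioi 0) := by
      apply (hintd k m).congr_fun _ measurableSet_Ioi
      intro x hx
      ring
    have hint3 : IntegrableOn (fun x : ℝ => x * p m t x * p k t x * w x) (Set.Ioi 0) := by
      simpa [w, mul_assoc] using hxint t ht m k
    have hi12 : Integrable (fun x : ℝ => dtp m t x * p k t x * w x
        + p m t x * dtp k t x * w x) (volume.restrict (Set.Ioi 0)) := (hintd m k).add hint2
    rw [setIntegral_congr_fun measurableSet_Ioi heq,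
      integral_sub hi12 hint3,
      integral_add (hintd m k) hint2, hA m k, hB m k] at h0
    have hA' : ∫ x in Set.Ioi (0 : ℝ), p m t x * dtp k t x * w x
        = if m ≤ k then C m k t else 0 := by
      rw [← hA k m]
      apply setIntegral_congr_fun measurableSet_Ioi
      intro x hx
      ring
    rw [hA'] at h0
    linarith
  -- now derive the four conclusions
  have c1 : C n n t = b n t / 2 := by
    have h := hC n n
    rcases Nat.eq_zero_or_pos n with hn | hn
    · subst hn
      simp [ha0] at h
      linarith
    · have h1 : ¬ (n + 1 = n) := by omega
      have h2 : ¬ (n - 1 = n) := by omega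
      simp [h1, h2] at h
      linarith
  have c2 : 1 ≤ n → C (n - 1) n t = a n t := by
    intro hn
    have h := hC (n - 1) n
    have h1 : ¬ (n ≤ n - 1) := by omega
    have h2 : n - 1 ≤ n := by omega
    have h3 : n - 1 + 1 = n := by omega
    have h4 : ¬ (n - 1 = n) := by omega
    have h5 : ¬ (n - 1 - 1 = n) := by omega
    simp [h1, h2, h3, h4, h5] at h
    linarith
  have c3 : ∀ m : ℕ, m + 1 < n → C m n t = 0 := by
    intro m hm
    have h := hC m n
    have h1 : ¬ (n ≤ m) := by omega
    have h2 : m ≤ n := by omega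
    have h3 : ¬ (m + 1 = n) := by omega
    have h4 : ¬ (m = n) := by omega
    have h5 : ¬ (m - 1 = n) := by omega
    simp [h1, h2, h3, h4, h5] at h
    linarith
  refine ⟨c1, c2, c3, ?_⟩
  intro x hx
  rcases Nat.eq_zero_or_pos n with hn | hn
  · subst hn
    rw [hexp t ht 0 x hx]
    simp [c1, ha0]
  · obtain ⟨m, rfl⟩ : ∃ m, n = m + 1 := ⟨n - 1, by omega⟩
    rw [hexp t ht (m + 1) x hx, Finset.sum_range_succ, Finset.sum_range_succ]
    have hz : ∑ k ∈ Finset.range m, C k (m + 1) t * p k t x = 0 := by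
      apply Finset.sum_eq_zero
      intro k hk
      rw [c3 k (by simpa [Nat.lt_succ_iff] using Finset.mem_range.mp hk), zero_mul]
    have hc2 := c2 (by omega)
    simp only [Nat.add_sub_cancel] at hc2
    rw [hz, zero_add, c1, hc2]
    simp only [Nat.add_sub_cancel]
    ring
end

section
/- Fourier expansion of the t-derivative of Hermite-type orthonormal polynomials (Theorem 2.5). Let α > −1 and let I ⊆ (0,∞) be an open interval. Let P : ℕ → I → ℝ → ℝ, A : ℕ → I → ℝ with A_0 ≡ 0 and P_{−1} ≡ P_{−2} ≡ 0, and C : ℕ → ℕ → I → ℝ. Assume for all t ∈ I: (i) for all m, n: the function x ↦ P_m(t,x)·P_n(t,x)·|x|^{2α+1}·e^{−tx²} is Lebesgue integrable on ℝ and ∫_ℝ P_m(t,x)·P_n(t,x)·|x|^{2α+1}·e^{−tx²} dx = δ_{mn}; (ii) for all n and x: x·P_n(t,x) = A_{n+1}(t)·P_{n+1}(t,x) + A_n(t)·P_{n−1}(t,x); (iii) for all n and x the partial derivative ∂_t P_n(t,x) exists and ∂_t P_n(t,x) = Σ_{k=0}^n C_{kn}(t)·P_k(t,x); (iv) for all m,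 n: the function x ↦ x²·P_m(t,x)·P_n(t,x)·|x|^{2α+1}·e^{−tx²} is integrable and ∫_ℝ [∂_t P_m(t,x)·P_n(t,x) + P_m(t,x)·∂_t P_n(t,x) − x²·P_m(t,x)·P_n(t,x)]·|x|^{2α+1}·e^{−tx²} dx = 0. Then for all n and t: C_{nn}(t) = (1/2)·(A_{n+1}(t)² + A_n(t)²), C_{n−2,n}(t) = A_{n−1}(t)·A_n(t), and C_{mn}(t) = 0 for all other m < n; consequced ∂_t P_n(t,x) = (1/2)·(A_{n+1}(t)² + A_n(t)²)·P_n(t,x) + A_{n−1}(t)·A_n(t)·P_{n−2}(t,x). -/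
open MeasureTheory

/-- Theorem 2.5: Fourier expansion of the t-derivative of the orthonormal
polynomials of the deformed Hermite-type weight `|x|^(2α+1) · exp(−t·x²)` on ℝ.
Here `dtP n t x` denotes the partial derivative ∂ₜ Pₙ(t,x), `C k n t` are the
Fourier coefficients of the expansion of ∂ₜ Pₙ(t,·) in the basis {Pₖ(t,·)},
and `A n t` are the recurrence coefficients (conventions `A 0 ≡ 0`,
`P₋₁ ≡ P₋₂ ≡ 0`, encoded via truncated subtraction and `hA0`). -/
theorem hermite_deriv_fourier_expansion (α : ℝ) (hα : -1 < α) (I : Set ℝ)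
    (hIint : ∃ c d : ℝ, I = Set.Ioo c d) (hIpos : I ⊆ Set.Ioi 0)
    (P dtP : ℕ → ℝ → ℝ → ℝ) (A : ℕ → ℝ → ℝ) (C : ℕ → ℕ → ℝ → ℝ)
    (hA0 : ∀ t : ℝ, A 0 t = 0)
    (horthint : ∀ t ∈ I, ∀ m n : ℕ,
      Integrable (fun x : ℝ =>
        P m t x * P n t x * |x| ^ (2 * α + 1) * Real.exp (-t * x ^ 2)))
    (horth : ∀ t ∈ I, ∀ m n : ℕ,
      ∫ x : ℝ, P m t x * P n t x * |x| ^ (2 * α + 1) * Real.exp (-t * x ^ 2)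
        = if m = n then 1 else 0)
    (hrec : ∀ t ∈ I, ∀ n : ℕ, ∀ x : ℝ,
      x * P n t x = A (n + 1) t * P (n + 1) t x + A n t * P (n - 1) t x)
    (hderiv : ∀ t ∈ I, ∀ n : ℕ, ∀ x : ℝ,
      HasDerivAt (fun s : ℝ => P n s x) (dtP n t x) t)
    (hexp : ∀ t ∈ I, ∀ n : ℕ, ∀ x : ℝ,
      dtP n t x = ∑ k ∈ Finset.range (n + 1), C k n t * P k t x)
    (hxint : ∀ t ∈ I, ∀ m n : ℕ,
      Integrable (fun x : ℝ =>
        x ^ 2 * P m t x * P n t x * |x| ^ (2 * α + 1) * Real.exp (-t * x ^ 2)))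
    (hdorth : ∀ t ∈ I, ∀ m n : ℕ,
      ∫ x : ℝ,
        (dtP m t x * P n t x + P m t x * dtP n t x - x ^ 2 * P m t x * P n t x)
          * |x| ^ (2 * α + 1) * Real.exp (-t * x ^ 2) = 0) :
    ∀ t ∈ I, ∀ n : ℕ,
      C n n t = 1 / 2 * (A (n + 1) t ^ 2 + A n t ^ 2) ∧
      (2 ≤ n → C (n - 2) n t = A (n - 1) t * A n t) ∧
      (∀ m : ℕ, m < n → m + 2 ≠ n → C m n t = 0) ∧
      (∀ x : ℝ,
        dtP n t x = 1 / 2 * (A (n + 1) t ^ 2 + A n t ^ 2) * P n t x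
          + A (n - 1) t * A n t * P (n - 2) t x) := by
  intro t ht
  have horthint' := horthint t ht
  have horth' := horth t ht
  -- rewrite the dtP-product integrand as a finite sum
  have heq : ∀ m k : ℕ,
      (fun x : ℝ => dtP m t x * P k t x * |x| ^ (2 * α + 1) * Real.exp (-t * x ^ 2))
        = fun x : ℝ => ∑ j ∈ Finset.range (m + 1),
            C j m t * (P j t x * P k t x * |x| ^ (2 * α + 1) * Real.exp (-t * x ^ 2)) := by
    intro m k
    funext x
    rw [hexp t ht m x, Finset.sum_mul, Finset.sum_mul, Finset.sum_mul]
    exact Finset.sum_congr rfl fun j _ => by ring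
  have IntdtP : ∀ m k : ℕ,
      Integrable (fun x : ℝ =>
        dtP m t x * P k t x * |x| ^ (2 * α + 1) * Real.exp (-t * x ^ 2)) := by
    intro m k
    rw [heq m k]
    exact integrable_finset_sum _ fun j _ => (horthint' j k).const_mul _
  have IdtP : ∀ m k : ℕ,
      ∫ x : ℝ, dtP m t x * P k t x * |x| ^ (2 * α + 1) * Real.exp (-t * x ^ 2)
        = if k ≤ m then C k m t else 0 := by
    intro m k
    rw [heq m k, integral_finset_sum _ fun j _ => (horthint' j k).const_mul _]
    have : ∀ j ∈ Finset.range (m + 1),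
        (∫ x : ℝ, C j m t * (P j t x * P k t x * |x| ^ (2 * α + 1) * Real.exp (-t * x ^ 2)))
          = if j = k then C j m t else 0 := by
      intro j _
      rw [MeasureTheory.integral_const_mul, horth' j k]
      simp [mul_ite]
    rw [Finset.sum_congr rfl this, Finset.sum_ite_eq' (Finset.range (m + 1)) k
      (fun j => C j m t)]
    simp [Finset.mem_range, Nat.lt_succ_iff]
  -- helper for the recurrence with truncated subtraction
  have helper : ∀ (m : ℕ) (x : ℝ),
      A m t * (x * P (m - 1) t x)
        = A m t * (A m t * P m t x + A (m - 1) t * P (m - 2) t x) := by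
    intro m x
    match m with
    | 0 => simp [hA0]
    | Nat.succ p =>
      have h := hrec t ht p x
      have e1 : p + 1 - 1 = p := by omega
      have e2 : p + 1 - 2 = p - 1 := by omega
      rw [e1, e2, h]
  have Ix2 : ∀ m k : ℕ,
      ∫ x : ℝ, x ^ 2 * P m t x * P k t x * |x| ^ (2 * α + 1) * Real.exp (-t * x ^ 2)
        = (if m + 2 = k then A (m + 1) t * A (m + 2) t else 0)
          + (if m = k then A (m + 1) t ^ 2 + A m t ^ 2 else 0)
          + (if m - 2 = k then A m t * A (m - 1) t else 0) := by
    intro m k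
    have hpt : (fun x : ℝ =>
        x ^ 2 * P m t x * P k t x * |x| ^ (2 * α + 1) * Real.exp (-t * x ^ 2))
        = fun x : ℝ =>
          A (m + 1) t * A (m + 2) t *
            (P (m + 2) t x * P k t x * |x| ^ (2 * α + 1) * Real.exp (-t * x ^ 2))
          + (A (m + 1) t ^ 2 + A m t ^ 2) *
            (P m t x * P k t x * |x| ^ (2 * α + 1) * Real.exp (-t * x ^ 2))
          + A m t * A (m - 1) t *
            (P (m - 2) t x * P k t x * |x| ^ (2 * α + 1) * Real.exp (-t * x ^ 2)) := by
      funext x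
      have h1 := hrec t ht m x
      have h2 := hrec t ht (m + 1) x
      have h3 := helper m x
      have e1 : m + 1 - 1 = m := by omega
      rw [e1] at h2
      linear_combination (x * P k t x * (|x| ^ (2 * α + 1) * Real.exp (-t * x ^ 2))) * h1
        + (A (m + 1) t * P k t x * (|x| ^ (2 * α + 1) * Real.exp (-t * x ^ 2))) * h2
        + (P k t x * (|x| ^ (2 * α + 1) * Real.exp (-t * x ^ 2))) * h3
    have i1 : Integrable (fun x : ℝ =>
        A (m + 1) t * A (m + 2) t *
          (P (m + 2) t x * P k t x * |x| ^ (2 * α + 1) * Real.exp (-t * x ^ 2))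
        + (A (m + 1) t ^ 2 + A m t ^ 2) *
          (P m t x * P k t x * |x| ^ (2 * α + 1) * Real.exp (-t * x ^ 2))) :=
      ((horthint' (m + 2) k).const_mul _).add ((horthint' m k).const_mul _)
    rw [hpt,
      integral_add i1 ((horthint' (m - 2) k).const_mul _),
      integral_add ((horthint' (m + 2) k).const_mul _) ((horthint' m k).const_mul _),
      MeasureTheory.integral_const_mul, MeasureTheory.integral_const_mul,
      MeasureTheory.integral_const_mul,
      horth' (m + 2) k, horth' m k, horth' (m - 2) k]
    simp only [mul_ite, mul_one, mul_zero]
  -- master equation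
  have master : ∀ m k : ℕ,
      (if k ≤ m then C k m t else 0) + (if m ≤ k then C m k t else 0)
        = (if m + 2 = k then A (m + 1) t * A (m + 2) t else 0)
          + (if m = k then A (m + 1) t ^ 2 + A m t ^ 2 else 0)
          + (if m - 2 = k then A m t * A (m - 1) t else 0) := by
    intro m k
    have hd := hdorth t ht m k
    have h0 : (fun x : ℝ =>
        (dtP m t x * P k t x + P m t x * dtP k t x - x ^ 2 * P m t x * P k t x)
          * |x| ^ (2 * α + 1) * Real.exp (-t * x ^ 2))
        = fun x : ℝ =>
          (dtP m t x * P k t x * |x| ^ (2 * α + 1) * Real.exp (-t * x ^ 2)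
            + dtP k t x * P m t x * |x| ^ (2 * α + 1) * Real.exp (-t * x ^ 2))
          - x ^ 2 * P m t x * P k t x * |x| ^ (2 * α + 1) * Real.exp (-t * x ^ 2) :=
      funext fun x => by ring
    rw [h0] at hd
    have i1 : Integrable (fun x : ℝ =>
        dtP m t x * P k t x * |x| ^ (2 * α + 1) * Real.exp (-t * x ^ 2)
        + dtP k t x * P m t x * |x| ^ (2 * α + 1) * Real.exp (-t * x ^ 2)) :=
      (IntdtP m k).add (IntdtP k m)
    rw [integral_sub i1 (hxint t ht m k),
      integral_add (IntdtP m k) (IntdtP k m), IdtP m k, IdtP k m, Ix2 m k] at hd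
    linarith
  intro n
  have hne : (if n - 2 = n then A n t * A (n - 1) t else 0) = 0 := by
    rcases n with _ | p
    · simp [hA0]
    · rw [if_neg (by omega)]
  have hCnn : C n n t = 1 / 2 * (A (n + 1) t ^ 2 + A n t ^ 2) := by
    have h := master n n
    rw [if_pos (le_refl n), if_neg (by omega : ¬ n + 2 = n), if_pos rfl, hne] at h
    linarith
  have hCm0 : ∀ m : ℕ, m < n →
      C m n t = if m + 2 = n then A (m + 1) t * A (m + 2) t else 0 := by
    intro m hm
    have h := master m n
    rw [if_neg (by omega : ¬ n ≤ m), if_pos (le_of_lt hm), if_neg (by omega : ¬ m = n),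
      if_neg (by omega : ¬ m - 2 = n)] at h
    linarith
  refine ⟨hCnn, ?_, ?_, ?_⟩
  · intro h2
    have h := hCm0 (n - 2) (by omega)
    rw [if_pos (by omega)] at h
    have e1 : n - 2 + 1 = n - 1 := by omega
    have e2 : n - 2 + 2 = n := by omega
    rw [e1, e2] at h
    exact h
  · intro m hm hm2
    have h := hCm0 m hm
    rw [if_neg hm2] at h
    exact h
  · intro x
    rcases n with _ | _ | p
    · rw [hexp t ht 0 x, Finset.sum_range_one, hCnn]
      simp [hA0]
    · rw [hexp t ht 1 x, Finset.sum_range_succ, Finset.sum_range_one]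
      have h01 : C 0 1 t = 0 := by
        have h := hCm0 0 (by omega)
        rw [if_neg (by omega)] at h
        exact h
      rw [h01, hCnn]
      simp [hA0]
    · rw [hexp t ht (p + 2) x, Finset.sum_range_succ]
      have hsum : ∑ k ∈ Finset.range (p + 2), C k (p + 2) t * P k t x
          = C p (p + 2) t * P p t x := by
        apply Finset.sum_eq_single_of_mem p (Finset.mem_range.mpr (by omega))
        intro b hb hbp
        have hb' := Finset.mem_range.mp hb
        have hC : C b (p + 2) t = 0 := by
          have h := hCm0 b (by omega)
          rw [if_neg (by omega)] at h
          exact h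
        rw [hC, zero_mul]
      have hCp : C p (p + 2) t = A (p + 1) t * A (p + 2) t := by
        have h := hCm0 p (by omega)
        rw [if_pos rfl] at h
        exact h
      rw [hsum, hCnn, hCp]
      have e1 : p + 2 - 1 = p + 1 := by omega
      have e2 : p + 2 - 2 = p := by omega
      rw [e1, e2]
      ring
end

section
/- Consequences of the master equation for the Fourier coefficients of the κ-deformed little q-Laguerre polynomials (Theorem 3.1). Let 0 < q < 1, κ ≠ 0, and set λ = (1−q)·κ. Let ξ : ℕ × ℕ → ℝ (with ξ_{mn} defined for m ≤ n) and ā, b̄ : ℕ → ℝ be real numbers such that 1 − λ·ξ_{mm} ≠ 0 for all m, and assume the master equation: for all m ≤ n, (1 − λ·ξ_{mm})·ξ_{mn} − λ·Σ_{j=0}^{m−1} ξ_{jm}·ξ_{jn} + δ_{mn}·ξ_{nn} = δ_{m,n−1}·(q/(1−q))·ā_n + δ_{mn}·(q/(1−q))·b̄_n. Then: (i) ξ_{mn} = 0 whenever m + 2 ≤ n; (ii) for all n ≥ 1: ξ_{n−1,n}·(1 − λ·ξ_{n−1,n−1}) = (q/(1−q))·ā_n; (iii) for all n ≥ 1: (1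 − λ·ξ_{nn})² + (q·κ·ā_n)²/(1 − λ·ξ_{n−1,n−1})² = 1 − q·κ·b̄_n; and (iv) (1 − λ·ξ_{00})² = 1 − q·κ·b̄_0. -/
/-- Theorem 3.1: consequences of the master equation for the Fourier
coefficients `ξ m n` of the κ-deformation (q-derivative) of the little
q-Laguerre orthonormal polynomials, where `abar n = aₙ(qκ)` and
`bbar n = bₙ(qκ)` are the rescaled recurrence coefficients and
`λ = (1−q)·κ`. -/
theorem little_qLaguerre_master_equation_consequences
    (q κ lam : ℝ) (hq0 : 0 < q) (hq1 : q < 1) (hκ : κ ≠ 0)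
    (hlam : lam = (1 - q) * κ)
    (ξ : ℕ → ℕ → ℝ) (abar bbar : ℕ → ℝ)
    (hnz : ∀ m : ℕ, 1 - lam * ξ m m ≠ 0)
    (hmaster : ∀ m n : ℕ, m ≤ n →
      (1 - lam * ξ m m) * ξ m n - lam * ∑ j ∈ Finset.range m, ξ j m * ξ j n
          + (if m = n then ξ n n else 0)
        = (if m + 1 = n then q / (1 - q) * abar n else 0)
          + (if m = n then q / (1 - q) * bbar n else 0)) :
    (∀ m n : ℕ, m + 2 ≤ n → ξ m n = 0) ∧
    (∀ n : ℕ, 1 ≤ n →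
      ξ (n - 1) n * (1 - lam * ξ (n - 1) (n - 1)) = q / (1 - q) * abar n) ∧
    (∀ n : ℕ, 1 ≤ n →
      (1 - lam * ξ n n) ^ 2
          + (q * κ * abar n) ^ 2 / (1 - lam * ξ (n - 1) (n - 1)) ^ 2
        = 1 - q * κ * bbar n) ∧
    (1 - lam * ξ 0 0) ^ 2 = 1 - q * κ * bbar 0 := by
  have h1q : (1 : ℝ) - q ≠ 0 := by linarith
  have hQ : lam * (q / (1 - q)) = q * κ := by
    rw [hlam]; field_simp
  -- Part (i)
  have hi : ∀ m n : ℕ, m + 2 ≤ n → ξ m n = 0 := by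
    intro m
    induction m using Nat.strong_induction_on with
    | _ m ih =>
      intro n hmn
      have h := hmaster m n (by omega)
      rw [if_neg (by omega : ¬ m = n), if_neg (by omega : ¬ m + 1 = n),
        if_neg (by omega : ¬ m = n)] at h
      have hsum : ∑ j ∈ Finset.range m, ξ j m * ξ j n = 0 := by
        refine Finset.sum_eq_zero fun j hj => ?_
        have hjm := Finset.mem_range.mp hj
        rw [ih j hjm n (by omega)]; ring
      rw [hsum] at h
      have h' : (1 - lam * ξ m m) * ξ m n = 0 := by linarith
      exact (mul_eq_zero.mp h').resolve_left (hnz m)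
  -- Part (ii)
  have hii : ∀ n : ℕ, 1 ≤ n →
      ξ (n - 1) n * (1 - lam * ξ (n - 1) (n - 1)) = q / (1 - q) * abar n := by
    intro n hn
    have h := hmaster (n - 1) n (by omega)
    rw [if_neg (by omega : ¬ n - 1 = n), if_pos (by omega : n - 1 + 1 = n),
      if_neg (by omega : ¬ n - 1 = n)] at h
    have hsum : ∑ j ∈ Finset.range (n - 1), ξ j (n - 1) * ξ j n = 0 := by
      refine Finset.sum_eq_zero fun j hj => ?_
      have hjm := Finset.mem_range.mp hj
      rw [hi j n (by omega)]; ring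
    rw [hsum] at h
    linarith [h]
  refine ⟨hi, hii, ?_, ?_⟩
  · -- Part (iii)
    intro n hn
    have h := hmaster n n le_rfl
    rw [if_pos rfl, if_neg (by omega : ¬ n + 1 = n), if_pos rfl] at h
    have hsum : ∑ j ∈ Finset.range n, ξ j n * ξ j n
        = ξ (n - 1) n * ξ (n - 1) n := by
      refine Finset.sum_eq_single_of_mem (n - 1) (Finset.mem_range.mpr (by omega))
        fun j hj hne => ?_
      have hjm := Finset.mem_range.mp hj
      rw [hi j n (by omega)]; ring
    rw [hsum] at h
    have e1 : q * κ * abar n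
        = lam * (ξ (n - 1) n * (1 - lam * ξ (n - 1) (n - 1))) := by
      rw [hii n hn, ← hQ]; ring
    have e2 : q * κ * bbar n
        = lam * ((1 - lam * ξ n n) * ξ n n
            - lam * (ξ (n - 1) n * ξ (n - 1) n) + ξ n n) := by
      rw [h, ← hQ]; ring
    have hd : (q * κ * abar n) ^ 2
        = (lam * ξ (n - 1) n) ^ 2 * (1 - lam * ξ (n - 1) (n - 1)) ^ 2 := by
      rw [e1]; ring
    rw [hd, mul_div_assoc, div_self (pow_ne_zero 2 (hnz (n - 1))), mul_one, e2]
    ring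
  · -- Part (iv)
    have h := hmaster 0 0 le_rfl
    simp only [Finset.range_zero, Finset.sum_empty, if_pos rfl,
      if_neg (by omega : ¬ (0 : ℕ) + 1 = 0), mul_zero, sub_zero, zero_add, eq_self_iff_true, if_true] at h
    have e : q * κ * bbar 0 = lam * ((1 - lam * ξ 0 0) * ξ 0 0 + ξ 0 0) := by
      rw [h, ← hQ]; ring
    rw [e]; ring
end

section
/- Coefficient-comparison relations for the κ-deformation of little q-Laguerre type polynomials (proof of Theorem 3.2). Let 0 < q < 1, κ ≠ 0, λ = (1−q)·κ. For κ' ∈ {κ, qκ}, let p_n(·,κ') be real polynomial functions of degree exactly n (with p_{−1} ≡ 0), and let a_n(κ'), b_n(κ') be reals with a_0 = 0 satisfying the recurrence x·p_n(x,κ') = a_{n+1}(κ')·p_{n+1}(x,κ') + b_n(κ')·p_n(x,κ') + a_n(κ')·p_{n−1}(x,κ') for all x. Assume there are reals ξ_{nn}, ξ_{n−1,n} such that for all n and x: (p_n(x,κ) − p_n(x,qκ))/((1−q)·κ) = ξ_{nn}·p_n(x,κ) + ξ_{n−1,n}·p_{n−1}(x,κ). Write D_q f := (f(κ) − f(qκ))/((1−q)κ),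 ā_n := a_n(qκ), b̄_n := b_n(qκ). Then for all n ≥ 1: (a) D_q a_n = ξ_{n−1,n−1}·a_n(κ) − ξ_{nn}·ā_n; (b) D_q b_n = ξ_{nn}·(b_n(κ) − b̄_n) + ξ_{n−1,n}·a_n(κ) − ξ_{n,n+1}·ā_{n+1} (also valid for n = 0); (c) D_q a_n = ξ_{n−1,n}·(b_{n−1}(κ) − b̄_n) + ξ_{nn}·a_n(κ) − ξ_{n−1,n−1}·ā_n; (d) for n ≥ 2: ξ_{n−2,n−1}·ā_n = ξ_{n−1,n}·a_{n−1}(κ); and (e) if moreover 1 − λ·ξ_{nn} ≠ 0, then ā_n = ((1 − λ·ξ_{n−1,n−1})/(1 − λ·ξ_{nn}))·a_n(κ). -/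
private lemma degCmulLe (c : ℝ) (P : Polynomial ℝ) :
    (Polynomial.C c * P).degree ≤ P.degree := by
  calc (Polynomial.C c * P).degree ≤ (Polynomial.C c).degree + P.degree :=
        Polynomial.degree_mul_le _ _
    _ ≤ 0 + P.degree := add_le_add Polynomial.degree_C_le le_rfl
    _ = P.degree := zero_add _

private lemma myStep {d : ℕ} {c : ℝ} {Q R : Polynomial ℝ}
    (hQ : Q.degree = (d : WithBot ℕ)) (hR : R.degree < (d : WithBot ℕ))
    (h : ∀ x : ℝ, c * Q.eval x + R.eval x = 0) :
    c = 0 ∧ ∀ x : ℝ, R.eval x = 0 := by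
  have hpoly : Polynomial.C c * Q + R = 0 :=
    Polynomial.funext fun x => by simpa using h x
  have hc : c = 0 := by
    by_contra hc
    have h1 : (Polynomial.C c * Q).degree = (d : WithBot ℕ) := by
      rw [Polynomial.degree_mul, Polynomial.degree_C hc, hQ, zero_add]
    have h2 : (Polynomial.C c * Q + R).degree = (d : WithBot ℕ) := by
      rw [Polynomial.degree_add_eq_left_of_degree_lt (by rw [h1]; exact hR), h1]
    rw [hpoly, Polynomial.degree_zero] at h2
    simp at h2
  refine ⟨hc, fun x => ?_⟩
  have hx := h x
  rw [hc] at hx; linarith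

private lemma extract1 {d : ℕ} {A : ℝ} {Q : Polynomial ℝ}
    (hQ : Q.degree = (d : WithBot ℕ)) (h : ∀ x : ℝ, A * Q.eval x = 0) :
    A = 0 := by
  by_contra hA
  have hQ0 : Q = 0 := Polynomial.funext fun x => by
    have hx := h x
    rcases mul_eq_zero.mp hx with h' | h'
    · exact absurd h' hA
    · simpa using h'
  rw [hQ0, Polynomial.degree_zero] at hQ
  simp at hQ

private lemma extract2 {d1 d0 : ℕ} {A B : ℝ} {Q1 Q0 : Polynomial ℝ}
    (hlt : d0 < d1)
    (h1 : Q1.degree = (d1 : WithBot ℕ)) (h0 : Q0.degree = (d0 : WithBot ℕ))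
    (h : ∀ x : ℝ, A * Q1.eval x + B * Q0.eval x = 0) :
    A = 0 ∧ B = 0 := by
  have hRdeg : (Polynomial.C B * Q0).degree < (d1 : WithBot ℕ) :=
    lt_of_le_of_lt (le_trans (degCmulLe _ _) (le_of_eq h0)) (by exact_mod_cast hlt)
  obtain ⟨hA, hrest⟩ := myStep h1 hRdeg (fun x => by simpa using h x)
  exact ⟨hA, extract1 h0 (fun x => by simpa using hrest x)⟩

private lemma extract3 {d2 d1 d0 : ℕ} {A B C : ℝ} {Q2 Q1 Q0 : Polynomial ℝ}
    (hlt1 : d1 < d2) (hlt0 : d0 < d1)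
    (h2 : Q2.degree = (d2 : WithBot ℕ)) (h1 : Q1.degree = (d1 : WithBot ℕ))
    (h0 : Q0.degree = (d0 : WithBot ℕ))
    (h : ∀ x : ℝ, A * Q2.eval x + B * Q1.eval x + C * Q0.eval x = 0) :
    A = 0 ∧ B = 0 ∧ C = 0 := by
  have hb1 : (Polynomial.C B * Q1).degree < (d2 : WithBot ℕ) :=
    lt_of_le_of_lt (le_trans (degCmulLe _ _) (le_of_eq h1)) (by exact_mod_cast hlt1)
  have hb0 : (Polynomial.C C * Q0).degree < (d2 : WithBot ℕ) :=
    lt_of_le_of_lt (le_trans (degCmulLe _ _) (le_of_eq h0))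
      (by exact_mod_cast (lt_trans hlt0 hlt1))
  have hRdeg : (Polynomial.C B * Q1 + Polynomial.C C * Q0).degree < (d2 : WithBot ℕ) :=
    lt_of_le_of_lt (Polynomial.degree_add_le _ _) (max_lt hb1 hb0)
  obtain ⟨hA, hrest⟩ := myStep h2 hRdeg (fun x => by
    simpa [add_assoc] using h x)
  exact ⟨hA, extract2 hlt0 h1 h0 (fun x => by simpa using hrest x)⟩

private lemma extract4 {d3 d2 d1 d0 : ℕ} {A B C D : ℝ}
    {Q3 Q2 Q1 Q0 : Polynomial ℝ}
    (hlt2 : d2 < d3) (hlt1 : d1 < d2) (hlt0 : d0 < d1)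
    (h3 : Q3.degree = (d3 : WithBot ℕ)) (h2 : Q2.degree = (d2 : WithBot ℕ))
    (h1 : Q1.degree = (d1 : WithBot ℕ)) (h0 : Q0.degree = (d0 : WithBot ℕ))
    (h : ∀ x : ℝ, A * Q3.eval x + B * Q2.eval x + C * Q1.eval x + D * Q0.eval x = 0) :
    A = 0 ∧ B = 0 ∧ C = 0 ∧ D = 0 := by
  have hb2 : (Polynomial.C B * Q2).degree < (d3 : WithBot ℕ) :=
    lt_of_le_of_lt (le_trans (degCmulLe _ _) (le_of_eq h2)) (by exact_mod_cast hlt2)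
  have hb1 : (Polynomial.C C * Q1).degree < (d3 : WithBot ℕ) :=
    lt_of_le_of_lt (le_trans (degCmulLe _ _) (le_of_eq h1))
      (by exact_mod_cast (lt_trans hlt1 hlt2))
  have hb0 : (Polynomial.C D * Q0).degree < (d3 : WithBot ℕ) :=
    lt_of_le_of_lt (le_trans (degCmulLe _ _) (le_of_eq h0))
      (by exact_mod_cast (lt_trans hlt0 (lt_trans hlt1 hlt2)))
  have hRdeg : (Polynomial.C B * Q2 + Polynomial.C C * Q1 + Polynomial.C D * Q0).degree
      < (d3 : WithBot ℕ) :=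
    lt_of_le_of_lt (Polynomial.degree_add_le _ _)
      (max_lt (lt_of_le_of_lt (Polynomial.degree_add_le _ _) (max_lt hb2 hb1)) hb0)
  obtain ⟨hA, hrest⟩ := myStep h3 hRdeg (fun x => by
    simpa [add_assoc] using h x)
  exact ⟨hA, extract3 hlt1 hlt0 h2 h1 h0 (fun x => by simpa [add_assoc] using hrest x)⟩

/-- Coefficient-comparison relations for the κ-deformation of little
q-Laguerre type polynomials (proof of Theorem 3.2).  Here `p n x κ'` are the
orthonormal polynomials at the two parameter values κ' ∈ {κ, qκ}, `a n κ'`,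
`b n κ'` are their recurrence coefficients (`a 0 = 0`, `p₋₁ ≡ 0` by truncated
subtraction), `xid n = ξ_{nn}` and `xio n = ξ_{n−1,n}` are the Fourier
coefficients of the q-derivative of `pₙ` with respect to κ, and
`D_q f = (f(κ) − f(qκ))/((1−q)κ)`. -/
theorem little_qLaguerre_coefficient_comparison
    (q κ lam : ℝ) (hq0 : 0 < q) (hq1 : q < 1) (hκ : κ ≠ 0)
    (hlam : lam = (1 - q) * κ)
    (p : ℕ → ℝ → ℝ → ℝ) (a b : ℕ → ℝ → ℝ) (xid xio : ℕ → ℝ)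
    (hdeg : ∀ κ' ∈ ({κ, q * κ} : Set ℝ), ∀ n : ℕ,
      ∃ Q : Polynomial ℝ, Q.degree = n ∧ ∀ x : ℝ, p n x κ' = Q.eval x)
    (ha0 : ∀ κ' ∈ ({κ, q * κ} : Set ℝ), a 0 κ' = 0)
    (hrec : ∀ κ' ∈ ({κ, q * κ} : Set ℝ), ∀ n : ℕ, ∀ x : ℝ,
      x * p n x κ' = a (n + 1) κ' * p (n + 1) x κ' + b n κ' * p n x κ'
        + a n κ' * p (n - 1) x κ')
    (hexp0 : ∀ x : ℝ,
      (p 0 x κ - p 0 x (q * κ)) / ((1 - q) * κ) = xid 0 * p 0 x κ)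
    (hexp : ∀ n : ℕ, 1 ≤ n → ∀ x : ℝ,
      (p n x κ - p n x (q * κ)) / ((1 - q) * κ)
        = xid n * p n x κ + xio n * p (n - 1) x κ) :
    (∀ n : ℕ, 1 ≤ n →
      (a n κ - a n (q * κ)) / ((1 - q) * κ)
        = xid (n - 1) * a n κ - xid n * a n (q * κ)) ∧
    (∀ n : ℕ,
      (b n κ - b n (q * κ)) / ((1 - q) * κ)
        = xid n * (b n κ - b n (q * κ)) + xio n * a n κ
          - xio (n + 1) * a (n + 1) (q * κ)) ∧
    (∀ n : ℕ, 1 ≤ n →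
      (a n κ - a n (q * κ)) / ((1 - q) * κ)
        = xio n * (b (n - 1) κ - b n (q * κ)) + xid n * a n κ
          - xid (n - 1) * a n (q * κ)) ∧
    (∀ n : ℕ, 2 ≤ n → xio (n - 1) * a n (q * κ) = xio n * a (n - 1) κ) ∧
    (∀ n : ℕ, 1 ≤ n → 1 - lam * xid n ≠ 0 →
      a n (q * κ) = (1 - lam * xid (n - 1)) / (1 - lam * xid n) * a n κ) := by
  subst hlam
  set lam := (1 - q) * κ with hlamdef
  have hne : lam ≠ 0 := mul_ne_zero (by linarith) hκ
  have hκmem : κ ∈ ({κ, q * κ} : Set ℝ) := Set.mem_insert _ _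
  have hqκmem : q * κ ∈ ({κ, q * κ} : Set ℝ) := Set.mem_insert_of_mem _ rfl
  -- normalized recurrences
  have hrecS : ∀ κ' ∈ ({κ, q * κ} : Set ℝ), ∀ (n : ℕ) (x : ℝ),
      x * p (n+1) x κ' = a (n+2) κ' * p (n+2) x κ' + b (n+1) κ' * p (n+1) x κ'
        + a (n+1) κ' * p n x κ' := by
    intro κ' hm n x
    have h := hrec κ' hm (n+1) x
    simpa [Nat.add_sub_cancel] using h
  have hrec0' : ∀ κ' ∈ ({κ, q * κ} : Set ℝ), ∀ x : ℝ,
      x * p 0 x κ' = a 1 κ' * p 1 x κ' + b 0 κ' * p 0 x κ' := by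
    intro κ' hm x
    have h := hrec κ' hm 0 x
    rw [ha0 κ' hm] at h
    simpa using h
  -- q-derivative expansions solved for p at q*κ
  have hΔS : ∀ (n : ℕ) (x : ℝ),
      p (n+1) x (q * κ) = p (n+1) x κ
        - lam * (xid (n+1) * p (n+1) x κ + xio (n+1) * p n x κ) := by
    intro n x
    have h := hexp (n+1) (by omega) x
    simp only [Nat.add_sub_cancel] at h
    rw [div_eq_iff hne] at h
    linear_combination -h
  have hΔ0 : ∀ x : ℝ,
      p 0 x (q * κ) = p 0 x κ - lam * (xid 0 * p 0 x κ) := by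
    intro x
    have h := hexp0 x
    rw [div_eq_iff hne] at h
    linear_combination -h
  -- master identities : coefficient comparison at each level
  have master0 :
      (a 1 κ * (1 - lam * xid 0) - a 1 (q*κ) * (1 - lam * xid 1) = 0) ∧
      (b 0 κ - lam * xid 0 * b 0 κ - lam * xio 0 * a 0 κ
        - (b 0 (q*κ) - lam * xio 1 * a 1 (q*κ) - lam * xid 0 * b 0 (q*κ)) = 0) := by
    obtain ⟨Q1, hQ1d, hQ1⟩ := hdeg κ hκmem 1
    obtain ⟨Q0, hQ0d, hQ0⟩ := hdeg κ hκmem 0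
    have hx : ∀ x : ℝ,
        (a 1 κ * (1 - lam * xid 0) - a 1 (q*κ) * (1 - lam * xid 1)) * Q1.eval x
        + (b 0 κ - lam * xid 0 * b 0 κ - lam * xio 0 * a 0 κ
          - (b 0 (q*κ) - lam * xio 1 * a 1 (q*κ) - lam * xid 0 * b 0 (q*κ))) * Q0.eval x
        = 0 := by
      intro x
      rw [← hQ1 x, ← hQ0 x]
      have r1 := hrec0' (q*κ) hqκmem x
      have d1 := hΔS 0 x
      rw [show (0:ℕ)+1 = 1 by omega] at d1
      rw [d1, hΔ0 x] at r1
      have r2 := hrec0' κ hκmem x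
      have h0 := ha0 κ hκmem
      linear_combination r1 - (1 - lam * xid 0) * r2 - lam * xio 0 * p 0 x κ * h0
    exact extract2 (by omega) hQ1d hQ0d hx
  have master1 :
      (a 2 κ * (1 - lam * xid 1) - a 2 (q*κ) * (1 - lam * xid 2) = 0) ∧
      (b 1 κ - lam * xid 1 * b 1 κ - lam * xio 1 * a 1 κ
        - (b 1 (q*κ) - lam * xio 2 * a 2 (q*κ) - lam * xid 1 * b 1 (q*κ)) = 0) ∧
      (a 1 κ - lam * xid 1 * a 1 κ - lam * xio 1 * b 0 κ
        - (a 1 (q*κ) - lam * xio 1 * b 1 (q*κ) - lam * xid 0 * a 1 (q*κ)) = 0) := by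
    obtain ⟨Q2, hQ2d, hQ2⟩ := hdeg κ hκmem 2
    obtain ⟨Q1, hQ1d, hQ1⟩ := hdeg κ hκmem 1
    obtain ⟨Q0, hQ0d, hQ0⟩ := hdeg κ hκmem 0
    have hx : ∀ x : ℝ,
        (a 2 κ * (1 - lam * xid 1) - a 2 (q*κ) * (1 - lam * xid 2)) * Q2.eval x
        + (b 1 κ - lam * xid 1 * b 1 κ - lam * xio 1 * a 1 κ
          - (b 1 (q*κ) - lam * xio 2 * a 2 (q*κ) - lam * xid 1 * b 1 (q*κ))) * Q1.eval x
        + (a 1 κ - lam * xid 1 * a 1 κ - lam * xio 1 * b 0 κ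
          - (a 1 (q*κ) - lam * xio 1 * b 1 (q*κ) - lam * xid 0 * a 1 (q*κ))) * Q0.eval x
        = 0 := by
      intro x
      rw [← hQ2 x, ← hQ1 x, ← hQ0 x]
      have r1 := hrecS (q*κ) hqκmem 0 x
      rw [show (0:ℕ)+2 = 2 by omega, show (0:ℕ)+1 = 1 by omega] at r1
      have d2 := hΔS 1 x
      rw [show (1:ℕ)+1 = 2 by omega] at d2
      have d1 := hΔS 0 x
      rw [show (0:ℕ)+1 = 1 by omega] at d1
      rw [d2, d1, hΔ0 x] at r1
      have r2 := hrecS κ hκmem 0 x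
      rw [show (0:ℕ)+2 = 2 by omega, show (0:ℕ)+1 = 1 by omega] at r2
      have r3 := hrec0' κ hκmem x
      linear_combination r1 - (1 - lam * xid 1) * r2 + lam * xio 1 * r3
    exact extract3 (by omega) (by omega) hQ2d hQ1d hQ0d hx
  have master : ∀ m : ℕ,
      (a (m+3) κ * (1 - lam * xid (m+2)) - a (m+3) (q*κ) * (1 - lam * xid (m+3)) = 0) ∧
      (b (m+2) κ - lam * xid (m+2) * b (m+2) κ - lam * xio (m+2) * a (m+2) κ
        - (b (m+2) (q*κ) - lam * xio (m+3) * a (m+3) (q*κ)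
            - lam * xid (m+2) * b (m+2) (q*κ)) = 0) ∧
      (a (m+2) κ - lam * xid (m+2) * a (m+2) κ - lam * xio (m+2) * b (m+1) κ
        - (a (m+2) (q*κ) - lam * xio (m+2) * b (m+2) (q*κ)
            - lam * xid (m+1) * a (m+2) (q*κ)) = 0) ∧
      (lam * xio (m+1) * a (m+2) (q*κ) - lam * xio (m+2) * a (m+1) κ = 0) := by
    intro m
    obtain ⟨Q3, hQ3d, hQ3⟩ := hdeg κ hκmem (m+3)
    obtain ⟨Q2, hQ2d, hQ2⟩ := hdeg κ hκmem (m+2)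
    obtain ⟨Q1, hQ1d, hQ1⟩ := hdeg κ hκmem (m+1)
    obtain ⟨Q0, hQ0d, hQ0⟩ := hdeg κ hκmem m
    have hx : ∀ x : ℝ,
        (a (m+3) κ * (1 - lam * xid (m+2)) - a (m+3) (q*κ) * (1 - lam * xid (m+3)))
          * Q3.eval x
        + (b (m+2) κ - lam * xid (m+2) * b (m+2) κ - lam * xio (m+2) * a (m+2) κ
          - (b (m+2) (q*κ) - lam * xio (m+3) * a (m+3) (q*κ)
              - lam * xid (m+2) * b (m+2) (q*κ))) * Q2.eval x
        + (a (m+2) κ - lam * xid (m+2) * a (m+2) κ - lam * xio (m+2) * b (m+1) κ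
          - (a (m+2) (q*κ) - lam * xio (m+2) * b (m+2) (q*κ)
              - lam * xid (m+1) * a (m+2) (q*κ))) * Q1.eval x
        + (lam * xio (m+1) * a (m+2) (q*κ) - lam * xio (m+2) * a (m+1) κ) * Q0.eval x
        = 0 := by
      intro x
      rw [← hQ3 x, ← hQ2 x, ← hQ1 x, ← hQ0 x]
      have r1 := hrecS (q*κ) hqκmem (m+1) x
      rw [show m+1+2 = m+3 by omega, show m+1+1 = m+2 by omega] at r1
      have d3 := hΔS (m+2) x
      rw [show m+2+1 = m+3 by omega] at d3
      have d2 := hΔS (m+1) x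
      rw [show m+1+1 = m+2 by omega] at d2
      have d1 := hΔS m x
      rw [d3, d2, d1] at r1
      have r2 := hrecS κ hκmem (m+1) x
      rw [show m+1+2 = m+3 by omega, show m+1+1 = m+2 by omega] at r2
      have r3 := hrecS κ hκmem m x
      linear_combination r1 - (1 - lam * xid (m+2)) * r2 + lam * xio (m+2) * r3
    exact extract4 (by omega) (by omega) (by omega) hQ3d hQ2d hQ1d hQ0d hx
  -- uniform coefficient equations
  have E1 : ∀ n : ℕ,
      a (n+1) κ * (1 - lam * xid n) - a (n+1) (q*κ) * (1 - lam * xid (n+1)) = 0 := by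
    intro n
    rcases n with _ | _ | k
    · exact master0.1
    · exact master1.1
    · simpa [show k+1+1+1 = k+3 by omega, show k+1+1 = k+2 by omega]
        using (master k).1
  have E2 : ∀ n : ℕ,
      b n κ - lam * xid n * b n κ - lam * xio n * a n κ
        - (b n (q*κ) - lam * xio (n+1) * a (n+1) (q*κ)
            - lam * xid n * b n (q*κ)) = 0 := by
    intro n
    rcases n with _ | _ | k
    · exact master0.2
    · exact master1.2.1
    · simpa [show k+1+1+1 = k+3 by omega, show k+1+1 = k+2 by omega]
        using (master k).2.1
  have E3 : ∀ n : ℕ,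
      a (n+1) κ - lam * xid (n+1) * a (n+1) κ - lam * xio (n+1) * b n κ
        - (a (n+1) (q*κ) - lam * xio (n+1) * b (n+1) (q*κ)
            - lam * xid n * a (n+1) (q*κ)) = 0 := by
    intro n
    rcases n with _ | k
    · exact master1.2.2
    · simpa [show k+1+1 = k+2 by omega] using (master k).2.2.1
  have E4 : ∀ n : ℕ,
      lam * xio (n+1) * a (n+2) (q*κ) - lam * xio (n+2) * a (n+1) κ = 0 :=
    fun n => (master n).2.2.2
  refine ⟨?_, ?_, ?_, ?_, ?_⟩
  · -- (a)
    intro n hn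
    obtain ⟨k, rfl⟩ : ∃ k, n = k + 1 := ⟨n - 1, by omega⟩
    have h := E1 k
    rw [div_eq_iff hne]
    simp only [Nat.add_sub_cancel]
    linear_combination h
  · -- (b)
    intro n
    have h := E2 n
    rw [div_eq_iff hne]
    linear_combination h
  · -- (c)
    intro n hn
    obtain ⟨k, rfl⟩ : ∃ k, n = k + 1 := ⟨n - 1, by omega⟩
    have h := E3 k
    rw [div_eq_iff hne]
    simp only [Nat.add_sub_cancel]
    linear_combination h
  · -- (d)
    intro n hn
    obtain ⟨k, rfl⟩ : ∃ k, n = k + 2 := ⟨n - 2, by omega⟩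
    have h := E4 k
    have h' : lam * (xio (k+1) * a (k+2) (q*κ) - xio (k+2) * a (k+1) κ) = 0 := by
      linear_combination h
    have := (mul_eq_zero.mp h').resolve_left hne
    simp only [show k+2-1 = k+1 by omega]
    linarith
  · -- (e)
    intro n hn hden
    obtain ⟨k, rfl⟩ : ∃ k, n = k + 1 := ⟨n - 1, by omega⟩
    have h := E1 k
    simp only [Nat.add_sub_cancel]
    rw [div_mul_eq_mul_div, eq_div_iff hden]
    linear_combination -h
end

section
/- q-Toda equations for the recursive coefficients of the generalized little q-Laguerre ensemble (Theorem 3.2). Let 0 < q < 1, κ ≠ 0, λ = (1−q)·κ. For κ' ∈ {κ, qκ}, let p_n(·,κ') be real polynomial functions of degree exactly n (with p_{−1} ≡ 0), and a_n(κ'), b_n(κ') reals with a_0 = 0 satisfying x·p_n(x,κ') = a_{n+1}(κ')·p_{n+1}(x,κ') + b_n(κ')·p_n(x,κ') + a_n(κ')·p_{n−1}(x,κ') for all x. Assume reals ξ_{nn}, ξ_{n−1,n} satisfy, for all n and x: (p_n(x,κ) − p_n(x,qκ))/((1−q)·κ) = ξ_{nn}·p_n(x,κ) + ξ_{n−1,n}·p_{n−1}(x,κ);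 assume 1 − λ·ξ_{nn} ≠ 0 for all n; and assume the master-equation relation ξ_{n−1,n}·(1 − λ·ξ_{nn}) = (q/(1−q))·a_n(κ) for all n ≥ 1. Write D_q f := (f(κ) − f(qκ))/((1−q)κ). Then for all n ≥ 1: D_q a_n = ((ξ_{n−1,n−1} − ξ_{nn})/(1 − λ·ξ_{nn}))·a_n(κ), and for all n ≥ 0: D_q b_n = (q/(1−q))·[(a_n(κ)/(1 − λ·ξ_{nn}))² − (a_{n+1}(κ)/(1 − λ·ξ_{n+1,n+1}))²]. -/
open Polynomial
lemma indep4 (n : ℕ) (c1 c2 c3 c4 : ℝ) (Q1 Q2 Q3 Q4 : Polynomial ℝ)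
    (h1 : Q1.degree = (n + 1 : ℕ)) (h2 : Q2.degree = (n : ℕ))
    (h3 : Q3.degree < (n : ℕ)) (h4 : Q4.degree < (n : ℕ))
    (h : ∀ x : ℝ, c1 * Q1.eval x + c2 * Q2.eval x + c3 * Q3.eval x + c4 * Q4.eval x = 0) :
    c1 = 0 ∧ c2 = 0 := by
  set R : Polynomial ℝ := C c1 * Q1 + C c2 * Q2 + C c3 * Q3 + C c4 * Q4 with hR
  have hRz : R = 0 := by
    apply Polynomial.funext
    intro x
    simpa [hR] using h x
  have hd1 : Q1.natDegree = n + 1 := natDegree_eq_of_degree_eq_some h1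
  have hd2 : Q2.natDegree = n := natDegree_eq_of_degree_eq_some h2
  have hn1 : Q1 ≠ 0 := fun h0 => by rw [h0, degree_zero] at h1; exact WithBot.bot_ne_coe h1
  have hn2 : Q2 ≠ 0 := fun h0 => by rw [h0, degree_zero] at h2; exact WithBot.bot_ne_coe h2
  have hQ1ne : Q1.coeff (n + 1) ≠ 0 := by
    rw [← hd1, coeff_natDegree]
    exact leadingCoeff_ne_zero.mpr hn1
  have hQ2ne : Q2.coeff n ≠ 0 := by
    rw [← hd2, coeff_natDegree]
    exact leadingCoeff_ne_zero.mpr hn2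
  have l2 : Q2.coeff (n+1) = 0 := coeff_eq_zero_of_degree_lt (by rw [h2]; exact_mod_cast Nat.lt_succ_self n)
  have l3 : Q3.coeff (n+1) = 0 := coeff_eq_zero_of_degree_lt (h3.trans (by exact_mod_cast Nat.lt_succ_self n))
  have l4 : Q4.coeff (n+1) = 0 := coeff_eq_zero_of_degree_lt (h4.trans (by exact_mod_cast Nat.lt_succ_self n))
  have l3' : Q3.coeff n = 0 := coeff_eq_zero_of_degree_lt h3
  have l4' : Q4.coeff n = 0 := coeff_eq_zero_of_degree_lt h4
  have e1 : c1 * Q1.coeff (n+1) = 0 := by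
    have := congrArg (fun P => Polynomial.coeff P (n+1)) hRz
    simpa [hR, l2, l3, l4] using this
  have hc1 : c1 = 0 := by
    rcases mul_eq_zero.mp e1 with h | h
    · exact h
    · exact absurd h hQ1ne
  have e2 : c2 * Q2.coeff n = 0 := by
    have := congrArg (fun P => Polynomial.coeff P n) hRz
    simpa [hR, hc1, l3', l4'] using this
  have hc2 : c2 = 0 := by
    rcases mul_eq_zero.mp e2 with h | h
    · exact h
    · exact absurd h hQ2ne
  exact ⟨hc1, hc2⟩


/-- Theorem 3.2: the q-Toda equations for the recurrence coefficients
`a n κ`, `b n κ` of the generalized little q-Laguerre orthonormal polynomials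
`p n · κ'` (κ' ∈ {κ, qκ}).  Here `xid n = ξ_{nn}` and `xio n = ξ_{n−1,n}` are
the Fourier coefficients of the q-derivative of `pₙ` with respect to κ,
`λ = (1−q)·κ`, `hmaster` is the master-equation relation
`ξ_{n−1,n}(1 − λξ_{nn}) = (q/(1−q))·aₙ(κ)`, and
`D_q f = (f(κ) − f(qκ))/((1−q)κ)`. -/
theorem little_qLaguerre_qToda
    (q κ lam : ℝ) (hq0 : 0 < q) (hq1 : q < 1) (hκ : κ ≠ 0)
    (hlam : lam = (1 - q) * κ)
    (p : ℕ → ℝ → ℝ → ℝ) (a b : ℕ → ℝ → ℝ) (xid xio : ℕ → ℝ)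
    (hdeg : ∀ κ' ∈ ({κ, q * κ} : Set ℝ), ∀ n : ℕ,
      ∃ Q : Polynomial ℝ, Q.degree = n ∧ ∀ x : ℝ, p n x κ' = Q.eval x)
    (ha0 : ∀ κ' ∈ ({κ, q * κ} : Set ℝ), a 0 κ' = 0)
    (hrec : ∀ κ' ∈ ({κ, q * κ} : Set ℝ), ∀ n : ℕ, ∀ x : ℝ,
      x * p n x κ' = a (n + 1) κ' * p (n + 1) x κ' + b n κ' * p n x κ'
        + a n κ' * p (n - 1) x κ')
    (hexp0 : ∀ x : ℝ,
      (p 0 x κ - p 0 x (q * κ)) / ((1 - q) * κ) = xid 0 * p 0 x κ)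
    (hexp : ∀ n : ℕ, 1 ≤ n → ∀ x : ℝ,
      (p n x κ - p n x (q * κ)) / ((1 - q) * κ)
        = xid n * p n x κ + xio n * p (n - 1) x κ)
    (hnz : ∀ n : ℕ, 1 - lam * xid n ≠ 0)
    (hmaster : ∀ n : ℕ, 1 ≤ n →
      xio n * (1 - lam * xid n) = q / (1 - q) * a n κ) :
    (∀ n : ℕ, 1 ≤ n →
      (a n κ - a n (q * κ)) / ((1 - q) * κ)
        = (xid (n - 1) - xid n) / (1 - lam * xid n) * a n κ) ∧
    (∀ n : ℕ,
      (b n κ - b n (q * κ)) / ((1 - q) * κ)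
        = q / (1 - q) * ((a n κ / (1 - lam * xid n)) ^ 2
            - (a (n + 1) κ / (1 - lam * xid (n + 1))) ^ 2)) := by
  subst hlam
  have hκK : κ ∈ ({κ, q * κ} : Set ℝ) := Set.mem_insert _ _
  have hqκK : q * κ ∈ ({κ, q * κ} : Set ℝ) := Set.mem_insert_of_mem _ rfl
  have h1q : (1 : ℝ) - q ≠ 0 := by linarith
  have hL : (1 - q) * κ ≠ 0 := mul_ne_zero h1q hκ
  set c : ℕ → ℝ := fun j => if j = 0 then 0 else xio j with hc
  have hc0 : c 0 = 0 := by simp [hc]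
  have hcs : ∀ k : ℕ, c (k + 1) = xio (k + 1) := fun k => by simp [hc]
  -- q-derivative expansion, uniform form
  have hexp' : ∀ j : ℕ, ∀ x : ℝ,
      p j x (q * κ) = (1 - ((1-q)*κ) * xid j) * p j x κ - ((1-q)*κ) * c j * p (j - 1) x κ := by
    intro j x
    cases j with
    | zero =>
        have h := hexp0 x
        rw [div_eq_iff hL] at h
        rw [hc0]
        ring_nf
        ring_nf at h
        linarith
    | succ k =>
        have h := hexp (k + 1) (Nat.succ_le_succ (Nat.zero_le k)) x
        rw [div_eq_iff hL] at h
        rw [hcs k]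
        ring_nf
        ring_nf at h
        linarith
  -- master, uniform form
  have hmaster' : ∀ n : ℕ, c n * (1 - ((1-q)*κ) * xid n) = q / (1 - q) * a n κ := by
    intro n
    cases n with
    | zero => rw [hc0, ha0 κ hκK]; ring
    | succ k => rw [hcs k]; exact hmaster (k + 1) (Nat.succ_le_succ (Nat.zero_le k))
  -- polynomials at κ
  obtain ⟨Q, hQd, hQe⟩ :
      ∃ Q : ℕ → Polynomial ℝ, (∀ n, (Q n).degree = n) ∧ ∀ n x, p n x κ = (Q n).eval x := by
    choose Q h1 h2 using hdeg κ hκK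
    exact ⟨Q, h1, h2⟩
  -- key coefficient identities
  have key : ∀ n : ℕ,
      ((1 - ((1-q)*κ) * xid n) * a (n + 1) κ - a (n + 1) (q * κ) * (1 - ((1-q)*κ) * xid (n + 1)) = 0) ∧
      ((1 - ((1-q)*κ) * xid n) * b n κ - ((1-q)*κ) * c n * a n κ + ((1-q)*κ) * c (n + 1) * a (n + 1) (q * κ)
        - b n (q * κ) * (1 - ((1-q)*κ) * xid n) = 0) := by
    intro n
    cases n with
    | zero =>
        apply indep4 0 _ _ 0 0 (Q 1) (Q 0) 0 0 (hQd 1) (hQd 0)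
          (by simp) (by simp)
        intro x
        have e0 := hexp' 0 x
        have e1 := hexp' 1 x
        have r0 := hrec κ hκK 0 x
        have r0' := hrec (q * κ) hqκK 0 x
        have ha0κ := ha0 κ hκK
        have ha0q := ha0 (q * κ) hqκK
        simp only [show (0 : ℕ) - 1 = 0 from rfl, show (1 : ℕ) - 1 = 0 from rfl,
          show (0 : ℕ) + 1 = 1 from rfl, ha0κ, ha0q, hc0, ← hQe] at *
        linear_combination (-(1 - ((1-q)*κ) * xid 0)) * r0 + r0' + a 1 (q * κ) * e1
          - (x - b 0 (q * κ)) * e0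
    | succ m =>
        apply indep4 (m + 1) _ _
          ((1 - ((1-q)*κ) * xid (m+1)) * a (m+1) κ - ((1-q)*κ) * c (m+1) * b m κ
            + ((1-q)*κ) * c (m+1) * b (m+1) (q * κ) - a (m+1) (q * κ) * (1 - ((1-q)*κ) * xid m))
          (a (m+1) (q * κ) * ((1-q)*κ) * c m - ((1-q)*κ) * c (m+1) * a m κ)
          (Q (m + 2)) (Q (m + 1)) (Q m) (Q (m - 1)) (hQd (m + 2)) (hQd (m + 1))
          (by rw [hQd m]; exact_mod_cast Nat.lt_succ_self m)
          (by rw [hQd (m - 1)]; exact_mod_cast Nat.lt_succ_of_le (Nat.sub_le m 1))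
        intro x
        have en1 := hexp' (m + 2) x
        have en := hexp' (m + 1) x
        have em := hexp' m x
        have rn := hrec κ hκK (m + 1) x
        have rm := hrec κ hκK m x
        have rn' := hrec (q * κ) hqκK (m + 1) x
        simp only [show m + 1 - 1 = m from rfl, show m + 2 - 1 = m + 1 from rfl,
          show m + 1 + 1 = m + 2 from rfl, ← hQe] at *
        linear_combination (-(1 - ((1-q)*κ) * xid (m+1))) * rn + (((1-q)*κ) * c (m+1)) * rm + rn'
          + (a (m+2) (q * κ)) * en1 - (x - b (m+1) (q * κ)) * en + (a (m+1) (q * κ)) * em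
  -- conclusion
  constructor
  · intro n hn
    obtain ⟨m, rfl⟩ : ∃ m, n = m + 1 := ⟨n - 1, (Nat.succ_pred_eq_of_pos hn).symm⟩
    have hA := (key m).1
    have hz1 := hnz (m + 1)
    have main1 : (a (m+1) κ - a (m+1) (q*κ)) * (1 - ((1-q)*κ) * xid (m+1))
        = (xid m - xid (m+1)) * a (m+1) κ * ((1-q)*κ) := by
      linear_combination hA
    simp only [Nat.add_sub_cancel]
    rw [div_eq_iff hL]
    rw [div_mul_eq_mul_div, div_mul_eq_mul_div, eq_div_iff hz1]
    linear_combination main1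
  · intro n
    have hA := (key n).1
    have hB := (key n).2
    have hmn := hmaster' n
    have hmn1 := hmaster' (n + 1)
    have hz := hnz n
    have hz1 := hnz (n + 1)
    have main : (b n κ - b n (q*κ)) * ((1 - ((1-q)*κ) * xid n)^2 * (1 - ((1-q)*κ) * xid (n+1))^2)
        = ((1-q)*κ) * (q/(1-q)) * (a n κ ^ 2 * (1 - ((1-q)*κ) * xid (n+1))^2
            - a (n+1) κ ^ 2 * (1 - ((1-q)*κ) * xid n)^2) := by
      linear_combination ((1 - ((1-q)*κ) * xid n) * (1 - ((1-q)*κ) * xid (n+1))^2) * hB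
        + (((1-q)*κ) * a n κ * (1 - ((1-q)*κ) * xid (n+1))^2) * hmn
        - (((1-q)*κ) * a (n+1) (q*κ) * (1 - ((1-q)*κ) * xid n) * (1 - ((1-q)*κ) * xid (n+1))) * hmn1
        + (((1-q)*κ) * (q/(1-q)) * a (n+1) κ * (1 - ((1-q)*κ) * xid n)) * hA
    have e2 : ((1 - ((1-q)*κ) * xid n)^2 * (1 - ((1-q)*κ) * xid (n+1))^2) ≠ 0 :=
      mul_ne_zero (pow_ne_zero _ hz) (pow_ne_zero _ hz1)
    rw [div_eq_iff hL, div_pow, div_pow,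
      div_sub_div _ _ (pow_ne_zero 2 hz) (pow_ne_zero 2 hz1), ← mul_div_assoc,
      div_mul_eq_mul_div, eq_div_iff e2]
    linear_combination main
end

section
/- Consequences of the master equation for the Fourier coefficients of the κ-deformed generalized q-Hermite polynomials (Theorem 3.4). Let 0 < q < 1, κ ≠ 0, λ = (1−q)·κ. Let Ξ : ℕ × ℕ → ℝ (with Ξ_{mn} defined for m ≤ n) and Ā : ℕ → ℝ be reals such that 1 − λ·Ξ_{mm} ≠ 0 for all m, Ξ_{mn} = 0 whenever n − m is odd (parity), and assume the master equation: for all m ≤ n, δ_{mn}·Ξ_{nn} + (1 − λ·Ξ_{mm})·Ξ_{mn} − λ·Σ_{j=0}^{m−1} Ξ_{jm}·Ξ_{jn} + δ_{mn}·(q²κ/(q−1))·(Ā_{n+1}² + Ā_n²) + δ_{m,n−2}·(q²κ/(q−1))·Ā_{n−1}·Ā_n = 0. Then: (i) Ξ_{mn} = 0 whenever m + 3 ≤ n; (ii) for all n ≥ 2: Ξ_{n−2,n}·(1 − λ·Ξ_{n−2,n−2}) = (q²κ/(1−q))·Ā_n·Ā_{n−1}; (iii) for all n ≥ 2: (1 −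 λ·Ξ_{nn})² + ((qκ)²·Ā_n·Ā_{n−1}/(1 − λ·Ξ_{n−2,n−2}))² = 1 − (qκ)²·(Ā_{n+1}² + Ā_n²). -/
/-- Theorem 3.4: consequences of the master equation for the Fourier
coefficients `Xi m n = Ξ_{mn}` of the κ-deformation (q-derivative) of the
generalized q-Hermite orthonormal polynomials, where `Abar n = Aₙ(qκ)` are
the rescaled recurrence coefficients, `λ = (1−q)·κ`, and `Ξ_{mn} = 0`
whenever `n − m` is odd (parity of the weight). -/
theorem qHermite_master_equation_consequences
    (q κ lam : ℝ) (hq0 : 0 < q) (hq1 : q < 1) (hκ : κ ≠ 0)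
    (hlam : lam = (1 - q) * κ)
    (Xi : ℕ → ℕ → ℝ) (Abar : ℕ → ℝ)
    (hnz : ∀ m : ℕ, 1 - lam * Xi m m ≠ 0)
    (hparity : ∀ m n : ℕ, m ≤ n → Odd (n - m) → Xi m n = 0)
    (hmaster : ∀ m n : ℕ, m ≤ n →
      (if m = n then Xi n n else 0) + (1 - lam * Xi m m) * Xi m n
          - lam * ∑ j ∈ Finset.range m, Xi j m * Xi j n
          + (if m = n then q ^ 2 * κ / (q - 1) * (Abar (n + 1) ^ 2 + Abar n ^ 2) else 0)
          + (if m + 2 = n then q ^ 2 * κ / (q - 1) * (Abar (n - 1) * Abar n) else 0)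
        = 0) :
    (∀ m n : ℕ, m + 3 ≤ n → Xi m n = 0) ∧
    (∀ n : ℕ, 2 ≤ n →
      Xi (n - 2) n * (1 - lam * Xi (n - 2) (n - 2))
        = q ^ 2 * κ / (1 - q) * (Abar n * Abar (n - 1))) ∧
    (∀ n : ℕ, 2 ≤ n →
      (1 - lam * Xi n n) ^ 2
          + ((q * κ) ^ 2 * Abar n * Abar (n - 1) / (1 - lam * Xi (n - 2) (n - 2))) ^ 2
        = 1 - (q * κ) ^ 2 * (Abar (n + 1) ^ 2 + Abar n ^ 2)) := by
  subst hlam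
  have hq1' : q - 1 ≠ 0 := by intro h; linarith
  have h1q : (1 : ℝ) - q ≠ 0 := by intro h; linarith
  have hCval : q ^ 2 * κ / (q - 1) * (q - 1) = q ^ 2 * κ := div_mul_cancel₀ _ hq1'
  -- Part (i)
  have part1 : ∀ m n : ℕ, m + 3 ≤ n → Xi m n = 0 := by
    intro m
    induction m using Nat.strong_induction_on with
    | _ m ih =>
      intro n hmn
      have h := hmaster m n (by omega)
      rw [if_neg (by omega : ¬ m = n), if_neg (by omega : ¬ m = n),
        if_neg (by omega : ¬ m + 2 = n)] at h
      have hsum : ∑ j ∈ Finset.range m, Xi j m * Xi j n = 0 :=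
        Finset.sum_eq_zero fun j hj => by
          have hjm := Finset.mem_range.mp hj
          rw [ih j hjm n (by omega), mul_zero]
      rw [hsum] at h
      have h2 : (1 - (1 - q) * κ * Xi m m) * Xi m n = 0 := by linear_combination h
      exact (mul_eq_zero.mp h2).resolve_left (hnz m)
  -- denominator-free form of Part (ii)
  have part2' : ∀ n : ℕ, 2 ≤ n →
      Xi (n - 2) n * (1 - (1 - q) * κ * Xi (n - 2) (n - 2)) * (1 - q)
        = q ^ 2 * κ * (Abar n * Abar (n - 1)) := by
    intro n hn
    have h := hmaster (n - 2) n (by omega)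
    rw [if_neg (by omega : ¬ n - 2 = n), if_neg (by omega : ¬ n - 2 = n),
      if_pos (by omega : n - 2 + 2 = n)] at h
    have hsum : ∑ j ∈ Finset.range (n - 2), Xi j (n - 2) * Xi j n = 0 :=
      Finset.sum_eq_zero fun j hj => by
        rw [part1 j n (by have := Finset.mem_range.mp hj; omega), mul_zero]
    rw [hsum] at h
    linear_combination (1 - q) * h + (Abar (n - 1) * Abar n) * hCval
  refine ⟨part1, ?_, ?_⟩
  · -- Part (ii)
    intro n hn
    rw [div_mul_eq_mul_div, eq_div_iff h1q]
    linear_combination part2' n hn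
  · -- Part (iii)
    intro n hn
    have h := hmaster n n le_rfl
    rw [if_pos rfl, if_pos rfl, if_neg (by omega : ¬ n + 2 = n)] at h
    have hsum : ∑ j ∈ Finset.range n, Xi j n * Xi j n
        = Xi (n - 2) n * Xi (n - 2) n := by
      apply Finset.sum_eq_single_of_mem
      · exact Finset.mem_range.mpr (by omega)
      · intro j hj hne
        have hj' := Finset.mem_range.mp hj
        rcases Nat.lt_or_ge (j + 3) (n + 1) with hlt | hge
        · rw [part1 j n (by omega)]; ring
        · have hz : Xi j n = 0 := hparity j n (by omega)
            (by have h1 : n - j = 1 := by omega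
                rw [h1]; exact odd_one)
          rw [hz]; ring
    rw [hsum] at h
    have hX : (q * κ) ^ 2 * Abar n * Abar (n - 1)
        / (1 - (1 - q) * κ * Xi (n - 2) (n - 2)) = (1 - q) * κ * Xi (n - 2) n := by
      rw [div_eq_iff (hnz (n - 2))]
      linear_combination (-κ) * part2' n hn
    rw [hX]
    linear_combination (-(1 - q) * κ) * h
      + (-(κ * (Abar (n + 1) ^ 2 + Abar n ^ 2))) * hCval
end

section
/- Quadratic relations between the Fourier coefficients of the κ-deformed q-Laguerre and q-Hermite polynomial systems (Theorem 3.6). Let 0 < q < 1 and κ ≠ 0. Let p_n(·;·), p̃_n(·;·), P_n(·;·) be families of real functions such that p_n(·;κ²) and p̃_n(·;κ²) are polynomial functions of degree exactly n. Assume: (i) for κ' ∈ {κ, qκ} and all x: P_{2n}(x;κ') = √((1+q)/2)·p_n(x²;κ'²) and P_{2n+1}(x;κ') = √((1+q)/2)·x·p̃_n(x²;κ'²); (ii) there are reals ξ_{nn}, ξ_{n−1,n}, ξ̃_{nn}, ξ̃_{n−1,n} with, for all y: (p_n(y;κ²) − p_n(y;q²κ²))/((1−q²)·κ²) = ξ_{nn}·p_n(y;κ²)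 + ξ_{n−1,n}·p_{n−1}(y;κ²) and (p̃_n(y;κ²) − p̃_n(y;q²κ²))/((1−q²)·κ²) = ξ̃_{nn}·p̃_n(y;κ²) + ξ̃_{n−1,n}·p̃_{n−1}(y;κ²); (iii) there are reals Ξ_{nn}, Ξ_{n−2,n} with, for all x: (P_n(x;κ) − P_n(x;qκ))/((1−q)·κ) = Ξ_{nn}·P_n(x;κ) + Ξ_{n−2,n}·P_{n−2}(x;κ). Then for all n: Ξ_{2n,2n} = (1+q)·κ·ξ_{nn}, Ξ_{2n−2,2n} = (1+q)·κ·ξ_{n−1,n}, Ξ_{2n+1,2n+1} = (1+q)·κ·ξ̃_{nn}, and Ξ_{2n−1,2n+1} = (1+q)·κ·ξ̃_{n−1,n}. -/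
private lemma aux_single (Q : Polynomial ℝ) (hQ : Q.degree = 0) (A : ℝ)
    (h : A * Q.eval 1 = 0) : A = 0 := by
  have h0 : Q.coeff 0 ≠ 0 := Polynomial.coeff_ne_zero_of_eq_degree hQ
  have hev : Q.eval 1 = Q.coeff 0 := by
    conv_lhs => rw [Polynomial.eq_C_of_degree_le_zero hQ.le]
    simp
  rw [hev] at h
  exact (mul_eq_zero.mp h).resolve_right h0

private lemma aux_pair (n : ℕ) (hn : 1 ≤ n) (Q R : Polynomial ℝ)
    (hQ : Q.degree = (n : ℕ)) (hR : R.degree = ((n - 1 : ℕ) : WithBot ℕ))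
    (A B : ℝ) (h : ∀ y : ℝ, 0 < y → A * Q.eval y + B * R.eval y = 0) :
    A = 0 ∧ B = 0 := by
  have hS : Polynomial.C A * Q + Polynomial.C B * R = 0 := by
    apply Polynomial.eq_zero_of_infinite_isRoot
    apply Set.Infinite.mono (s := Set.Ioi (0:ℝ)) ?_ (Set.Ioi_infinite 0)
    intro y hy
    simp only [Set.mem_setOf_eq, Polynomial.IsRoot, Polynomial.eval_add,
      Polynomial.eval_mul, Polynomial.eval_C]
    exact h y hy
  have hRn : R.coeff n = 0 := Polynomial.coeff_eq_zero_of_degree_lt (by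
    rw [hR]
    exact_mod_cast Nat.sub_lt hn one_pos)
  have hQn : Q.coeff n ≠ 0 := Polynomial.coeff_ne_zero_of_eq_degree hQ
  have hc := congrArg (fun s => Polynomial.coeff s n) hS
  simp only [Polynomial.coeff_add, Polynomial.coeff_C_mul, hRn, mul_zero,
    add_zero, Polynomial.coeff_zero] at hc
  have hA : A = 0 := (mul_eq_zero.mp hc).resolve_right hQn
  refine ⟨hA, ?_⟩
  rw [hA] at hS
  simp only [map_zero, zero_mul, zero_add] at hS
  have hRne : R ≠ 0 := fun h0 => by simp [h0] at hR
  have := mul_eq_zero.mp hS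
  rcases this with h' | h'
  · exact (Polynomial.C_eq_zero).mp h'
  · exact absurd h' hRne


/-- Theorem 3.6: quadratic relations between the Fourier coefficients of the
κ-deformed q-Laguerre and q-Hermite polynomial systems.  Here `p n y κ²` and
`pt n y κ²` are the little q-Laguerre polynomials (in base q², parameters α
and α+1), of degree exactly n in y, `P n x κ'` the generalized q-Hermite
polynomials, `xid n = ξ_{nn}`, `xio n = ξ_{n−1,n}` (resp. `xtd`, `xto` for the
tilde family) the Fourier coefficients of `D_{q²}^{κ²} pₙ` (resp. `D_{q²}^{κ²} p̃ₙ`),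
and `Xid n = Ξ_{nn}`, `Xio n = Ξ_{n−2,n}` those of `D_q^κ Pₙ`. -/
theorem fourier_coefficients_quadratic_relations
    (q κ : ℝ) (hq0 : 0 < q) (hq1 : q < 1) (hκ : κ ≠ 0)
    (p pt P : ℕ → ℝ → ℝ → ℝ)
    (xid xio xtd xto Xid Xio : ℕ → ℝ)
    (hdegp : ∀ n : ℕ,
      ∃ Q : Polynomial ℝ, Q.degree = n ∧ ∀ y : ℝ, p n y (κ ^ 2) = Q.eval y)
    (hdegpt : ∀ n : ℕ,
      ∃ Q : Polynomial ℝ, Q.degree = n ∧ ∀ y : ℝ, pt n y (κ ^ 2) = Q.eval y)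
    (hPeven : ∀ κ' ∈ ({κ, q * κ} : Set ℝ), ∀ (n : ℕ) (x : ℝ),
      P (2 * n) x κ' = Real.sqrt ((1 + q) / 2) * p n (x ^ 2) (κ' ^ 2))
    (hPodd : ∀ κ' ∈ ({κ, q * κ} : Set ℝ), ∀ (n : ℕ) (x : ℝ),
      P (2 * n + 1) x κ' = Real.sqrt ((1 + q) / 2) * x * pt n (x ^ 2) (κ' ^ 2))
    (hxi0 : ∀ y : ℝ,
      (p 0 y (κ ^ 2) - p 0 y (q ^ 2 * κ ^ 2)) / ((1 - q ^ 2) * κ ^ 2)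
        = xid 0 * p 0 y (κ ^ 2))
    (hxi : ∀ n : ℕ, 1 ≤ n → ∀ y : ℝ,
      (p n y (κ ^ 2) - p n y (q ^ 2 * κ ^ 2)) / ((1 - q ^ 2) * κ ^ 2)
        = xid n * p n y (κ ^ 2) + xio n * p (n - 1) y (κ ^ 2))
    (hxt0 : ∀ y : ℝ,
      (pt 0 y (κ ^ 2) - pt 0 y (q ^ 2 * κ ^ 2)) / ((1 - q ^ 2) * κ ^ 2)
        = xtd 0 * pt 0 y (κ ^ 2))
    (hxt : ∀ n : ℕ, 1 ≤ n → ∀ y : ℝ,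
      (pt n y (κ ^ 2) - pt n y (q ^ 2 * κ ^ 2)) / ((1 - q ^ 2) * κ ^ 2)
        = xtd n * pt n y (κ ^ 2) + xto n * pt (n - 1) y (κ ^ 2))
    (hXi0 : ∀ x : ℝ,
      (P 0 x κ - P 0 x (q * κ)) / ((1 - q) * κ) = Xid 0 * P 0 x κ)
    (hXi1 : ∀ x : ℝ,
      (P 1 x κ - P 1 x (q * κ)) / ((1 - q) * κ) = Xid 1 * P 1 x κ)
    (hXi : ∀ n : ℕ, 2 ≤ n → ∀ x : ℝ,
      (P n x κ - P n x (q * κ)) / ((1 - q) * κ)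
        = Xid n * P n x κ + Xio n * P (n - 2) x κ) :
    (∀ n : ℕ, Xid (2 * n) = (1 + q) * κ * xid n) ∧
    (∀ n : ℕ, Xid (2 * n + 1) = (1 + q) * κ * xtd n) ∧
    (∀ n : ℕ, 1 ≤ n → Xio (2 * n) = (1 + q) * κ * xio n) ∧
    (∀ n : ℕ, 1 ≤ n → Xio (2 * n + 1) = (1 + q) * κ * xto n) := by
  set c := Real.sqrt ((1 + q) / 2) with hcdef
  have hcpos : 0 < c := Real.sqrt_pos.mpr (by linarith)
  have hcne : c ≠ 0 := ne_of_gt hcpos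
  have hden : (1 - q) * κ ≠ 0 := mul_ne_zero (by linarith) hκ
  have hden2 : (1 - q ^ 2) * κ ^ 2 ≠ 0 :=
    mul_ne_zero (by nlinarith) (pow_ne_zero 2 hκ)
  have hκmem : κ ∈ ({κ, q * κ} : Set ℝ) := Set.mem_insert _ _
  have hqκmem : q * κ ∈ ({κ, q * κ} : Set ℝ) := Set.mem_insert_iff.mpr (Or.inr rfl)
  -- even, n ≥ 1
  have keyE : ∀ n : ℕ, 1 ≤ n →
      Xid (2 * n) = (1 + q) * κ * xid n ∧ Xio (2 * n) = (1 + q) * κ * xio n := by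
    intro n hn
    obtain ⟨Q, hQd, hQe⟩ := hdegp n
    obtain ⟨R, hRd, hRe⟩ := hdegp (n - 1)
    have key : ∀ y : ℝ, 0 < y →
        ((1 + q) * κ * xid n - Xid (2 * n)) * Q.eval y
          + ((1 + q) * κ * xio n - Xio (2 * n)) * R.eval y = 0 := by
      intro y hy
      have hx2 : Real.sqrt y ^ 2 = y := Real.sq_sqrt hy.le
      set x := Real.sqrt y with hxdef
      have h1 := hXi (2 * n) (by omega) x
      rw [hPeven κ hκmem n x, show (2 * n : ℕ) - 2 = 2 * (n - 1) by omega,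
        hPeven κ hκmem (n - 1) x, hPeven (q * κ) hqκmem n x,
        show (q * κ) ^ 2 = q ^ 2 * κ ^ 2 by ring, div_eq_iff hden] at h1
      have h2 := hxi n hn (x ^ 2)
      rw [div_eq_iff hden2] at h2
      have h3 : (c * ((1 - q) * κ)) *
          (((1 + q) * κ * xid n - Xid (2 * n)) * p n (x ^ 2) (κ ^ 2)
            + ((1 + q) * κ * xio n - Xio (2 * n)) * p (n - 1) (x ^ 2) (κ ^ 2)) = 0 := by
        linear_combination h1 - c * h2
      have h4 := (mul_eq_zero.mp h3).resolve_left (mul_ne_zero hcne hden)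
      rw [← hx2, ← hQe, ← hRe]
      exact h4
    obtain ⟨hA, hB⟩ := aux_pair n hn Q R hQd hRd _ _ key
    constructor <;> linarith
  -- odd, n ≥ 1
  have keyO : ∀ n : ℕ, 1 ≤ n →
      Xid (2 * n + 1) = (1 + q) * κ * xtd n ∧ Xio (2 * n + 1) = (1 + q) * κ * xto n := by
    intro n hn
    obtain ⟨Q, hQd, hQe⟩ := hdegpt n
    obtain ⟨R, hRd, hRe⟩ := hdegpt (n - 1)
    have key : ∀ y : ℝ, 0 < y →
        ((1 + q) * κ * xtd n - Xid (2 * n + 1)) * Q.eval y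
          + ((1 + q) * κ * xto n - Xio (2 * n + 1)) * R.eval y = 0 := by
      intro y hy
      have hx2 : Real.sqrt y ^ 2 = y := Real.sq_sqrt hy.le
      have hxpos : 0 < Real.sqrt y := Real.sqrt_pos.mpr hy
      set x := Real.sqrt y with hxdef
      have h1 := hXi (2 * n + 1) (by omega) x
      rw [show (2 * n + 1 : ℕ) - 2 = 2 * (n - 1) + 1 by omega,
        hPodd κ hκmem n x, hPodd κ hκmem (n - 1) x, hPodd (q * κ) hqκmem n x,
        show (q * κ) ^ 2 = q ^ 2 * κ ^ 2 by ring, div_eq_iff hden] at h1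
      have h2 := hxt n hn (x ^ 2)
      rw [div_eq_iff hden2] at h2
      have h3 : (c * x * ((1 - q) * κ)) *
          (((1 + q) * κ * xtd n - Xid (2 * n + 1)) * pt n (x ^ 2) (κ ^ 2)
            + ((1 + q) * κ * xto n - Xio (2 * n + 1)) * pt (n - 1) (x ^ 2) (κ ^ 2)) = 0 := by
        linear_combination h1 - c * x * h2
      have h4 := (mul_eq_zero.mp h3).resolve_left
        (mul_ne_zero (mul_ne_zero hcne (ne_of_gt hxpos)) hden)
      rw [← hx2, ← hQe, ← hRe]
      exact h4
    obtain ⟨hA, hB⟩ := aux_pair n hn Q R hQd hRd _ _ key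
    constructor <;> linarith
  -- even, n = 0
  have keyE0 : Xid 0 = (1 + q) * κ * xid 0 := by
    obtain ⟨Q, hQd, hQe⟩ := hdegp 0
    have hp1 := hPeven κ hκmem 0 (1 : ℝ)
    have hp2 := hPeven (q * κ) hqκmem 0 (1 : ℝ)
    norm_num [show (q * κ) ^ 2 = q ^ 2 * κ ^ 2 by ring] at hp1 hp2
    have h1 := hXi0 1
    rw [hp1, hp2, div_eq_iff hden] at h1
    have h2 := hxi0 1
    rw [div_eq_iff hden2] at h2
    have h3 : (c * ((1 - q) * κ)) *
        (((1 + q) * κ * xid 0 - Xid 0) * p 0 1 (κ ^ 2)) = 0 := by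
      linear_combination h1 - c * h2
    have h4 := (mul_eq_zero.mp h3).resolve_left (mul_ne_zero hcne hden)
    rw [hQe] at h4
    have := aux_single Q hQd _ h4
    linarith
  -- odd, n = 0
  have keyO0 : Xid 1 = (1 + q) * κ * xtd 0 := by
    obtain ⟨Q, hQd, hQe⟩ := hdegpt 0
    have hp1 := hPodd κ hκmem 0 (1 : ℝ)
    have hp2 := hPodd (q * κ) hqκmem 0 (1 : ℝ)
    norm_num [show (q * κ) ^ 2 = q ^ 2 * κ ^ 2 by ring] at hp1 hp2
    have h1 := hXi1 1
    rw [hp1, hp2, div_eq_iff hden] at h1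
    have h2 := hxt0 1
    rw [div_eq_iff hden2] at h2
    have h3 : (c * ((1 - q) * κ)) *
        (((1 + q) * κ * xtd 0 - Xid 1) * pt 0 1 (κ ^ 2)) = 0 := by
      linear_combination h1 - c * h2
    have h4 := (mul_eq_zero.mp h3).resolve_left (mul_ne_zero hcne hden)
    rw [hQe] at h4
    have := aux_single Q hQd _ h4
    linarith
  refine ⟨?_, ?_, fun n hn => (keyE n hn).2, fun n hn => (keyO n hn).2⟩
  · intro n
    rcases Nat.eq_zero_or_pos n with rfl | hn
    · simpa using keyE0
    · exact (keyE n hn).1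
  · intro n
    rcases Nat.eq_zero_or_pos n with rfl | hn
    · simpa using keyO0
    · exact (keyO n hn).1
end
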